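/- arXiv:2203.14377 — 6 statements merged into one kernel-verified Lean document; each statement's English description precedes it below -/
import Mathlib

section
/- Let n ≥ 2 and let E = diag(e₁,…,eₙ) ∈ ℝ^{n×n} be diagonal positive definite, partitioned as E = blockdiag(Ē, eₙ) with Ē = diag(e₁,…,e_{n−1}). Define Sₙ ∈ ℝ^{n×(n−1)} as the block matrix with −I_{n−1} on top of the row 1_{n−1}ᵀ, and Sₙᴸ := (Sₙᵀ E^{−1} Sₙ)^{−1} Sₙᵀ E^{−1} ∈ ℝ^{(n−1)×n}. Then trace(E)·Sₙᴸ = [ Ē 1_{n−1} 1_{n−1}ᵀ − trace(E)·I_{n−1} , Ē 1_{n−1} ], i.e., the first n−1 columns of trace(E)·Sₙᴸ equal Ē 1_{n−1} 1_{n−1}ᵀ − trace(E)·I_{n−1} and the last column equals Ē 1_{n−1}. (Proposition 1, equation (29).) -/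
open Matrix

/-- The all-ones column vector of length `k`, as a `k × 1` matrix. -/
def onesCol (k : ℕ) : Matrix (Fin k) (Fin 1) ℝ := Matrix.of fun _ _ => 1

/-- The matrix `Sₙ = [−I_{n−1}; 1_{n−1}ᵀ] ∈ ℝ^{n×(n−1)}`, with `n = m + 1`. -/
def Sn (m : ℕ) : Matrix (Fin (m + 1)) (Fin m) ℝ :=
  Matrix.of fun i j => if (i : ℕ) = m then 1 else if (i : ℕ) = (j : ℕ) then -1 else 0

/-- The weighted left inverse `Sₙᴸ = (Sₙᵀ E⁻¹ Sₙ)⁻¹ Sₙᵀ E⁻¹`. -/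
noncomputable def SnL (m : ℕ) (E : Matrix (Fin (m + 1)) (Fin (m + 1)) ℝ) :
    Matrix (Fin m) (Fin (m + 1)) ℝ :=
  ((Sn m)ᵀ * E⁻¹ * Sn m)⁻¹ * (Sn m)ᵀ * E⁻¹

/-- The upper-left `(n−1)×(n−1)` block `Ē` of `E`. -/
def Ebar (m : ℕ) (E : Matrix (Fin (m + 1)) (Fin (m + 1)) ℝ) : Matrix (Fin m) (Fin m) ℝ :=
  E.submatrix Fin.castSucc Fin.castSucc

/-- Proposition 1, equation (29): for diagonal positive definite `E`,
`trace(E)·Sₙᴸ = [ Ē 1 1ᵀ − trace(E) I , Ē 1 ]`. -/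
theorem trace_smul_SnL (m : ℕ) (hm : 1 ≤ m)
    (E : Matrix (Fin (m + 1)) (Fin (m + 1)) ℝ) (hdiag : E.IsDiag) (hpd : E.PosDef) :
    E.trace • SnL m E =
      Matrix.of fun (i : Fin m) (j : Fin (m + 1)) =>
        if h : (j : ℕ) < m then
          (Ebar m E * onesCol m * (onesCol m)ᵀ - E.trace • (1 : Matrix (Fin m) (Fin m) ℝ))
            i ⟨(j : ℕ), h⟩
        else (Ebar m E * onesCol m) i 0 := by
  classical
  set t : ℝ := E.trace with htdef
  set M : Matrix (Fin m) (Fin (m + 1)) ℝ :=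
      Matrix.of fun (i : Fin m) (j : Fin (m + 1)) =>
        if h : (j : ℕ) < m then
          (Ebar m E * onesCol m * (onesCol m)ᵀ - t • (1 : Matrix (Fin m) (Fin m) ℝ))
            i ⟨(j : ℕ), h⟩
        else (Ebar m E * onesCol m) i 0 with hMdef
  set d : Fin (m + 1) → ℝ := fun i => E i i with hd
  have hE : E = Matrix.diagonal d := by
    ext i j
    by_cases h : i = j
    · subst h; simp [hd]
    · rw [Matrix.diagonal_apply_ne _ h]; exact hdiag h
  have hpos : ∀ i, 0 < d i := by
    rw [hE] at hpd; exact (Matrix.posDef_diagonal_iff).mp hpd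
  have hne : ∀ i, d i ≠ 0 := fun i => (hpos i).ne'
  have hEinv : E⁻¹ = Matrix.diagonal (fun i => (d i)⁻¹) := by
    rw [hE]
    apply Matrix.inv_eq_right_inv
    rw [Matrix.diagonal_mul_diagonal]
    have h1 : (fun i => d i * (d i)⁻¹) = fun _ => (1 : ℝ) :=
      funext fun i => mul_inv_cancel₀ (hne i)
    rw [h1, Matrix.diagonal_one]
  have ht : t = ∑ i, d i := by simp [htdef, Matrix.trace, Matrix.diag, hd]
  have htpos : 0 < t := by
    rw [ht]; exact Finset.sum_pos (fun i _ => hpos i) Finset.univ_nonempty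
  have htne : t ≠ 0 := htpos.ne'
  have hsum : ∑ k : Fin m, d k.castSucc = t - d (Fin.last m) := by
    rw [ht, Fin.sum_univ_castSucc]; ring
  -- entries of Sn
  have hSn1 : ∀ (i j : Fin m), Sn m i.castSucc j = if i = j then (-1 : ℝ) else 0 := by
    intro i j
    simp only [Sn, Matrix.of_apply, Fin.coe_castSucc]
    rw [if_neg (Nat.ne_of_lt i.is_lt)]
    by_cases h : i = j
    · rw [if_pos (by rw [h]), if_pos h]
    · rw [if_neg (fun hh => h (Fin.ext hh)), if_neg h]
  have hSn2 : ∀ j : Fin m, Sn m (Fin.last m) j = 1 := by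
    intro j; simp [Sn]
  -- entries of B = Snᵀ E⁻¹
  have hB : ∀ (j : Fin m) (k : Fin (m + 1)),
      ((Sn m)ᵀ * E⁻¹) j k = Sn m k j * (d k)⁻¹ := by
    intro j k
    rw [hEinv, Matrix.mul_diagonal, Matrix.transpose_apply]
  -- entries of A = Snᵀ E⁻¹ Sn
  set A : Matrix (Fin m) (Fin m) ℝ := (Sn m)ᵀ * E⁻¹ * Sn m with hAdef
  have hA : ∀ j k : Fin m,
      A j k = (if j = k then (d j.castSucc)⁻¹ else 0) + (d (Fin.last m))⁻¹ := by
    intro j k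
    rw [hAdef, Matrix.mul_apply]
    rw [Finset.sum_congr rfl (fun i _ => by rw [hB])]
    rw [Fin.sum_univ_castSucc]
    have h1 : ∑ i : Fin m, Sn m i.castSucc j * (d i.castSucc)⁻¹ * Sn m i.castSucc k
        = if j = k then (d j.castSucc)⁻¹ else 0 := by
      rw [Finset.sum_eq_single j]
      · rw [hSn1, hSn1, if_pos rfl]
        by_cases h : j = k <;> simp [h]
      · intro i _ hij
        rw [hSn1, if_neg hij]; ring
      · intro h; exact absurd (Finset.mem_univ j) h
    rw [h1, hSn2, hSn2]
    ring
  -- products with onesCol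
  have hProd : ∀ i : Fin m, (Ebar m E * onesCol m) i 0 = d i.castSucc := by
    intro i
    rw [Matrix.mul_apply]
    simp [onesCol, Ebar, hE, Matrix.diagonal_apply, Fin.castSucc_inj]
  have hProd2 : ∀ (i q : Fin m),
      (Ebar m E * onesCol m * (onesCol m)ᵀ) i q = d i.castSucc := by
    intro i q
    rw [Matrix.mul_apply, Fin.sum_univ_one]
    have : (onesCol m)ᵀ 0 q = 1 := rfl
    rw [this, mul_one, hProd]
  -- entries of M
  have hM1 : ∀ i q : Fin m,
      M i q.castSucc = d i.castSucc - (if i = q then t else 0) := by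
    intro i q
    rw [hMdef]
    simp only [Matrix.of_apply]
    rw [dif_pos (by simpa using q.is_lt : ((q.castSucc : Fin (m+1)) : ℕ) < m)]
    have hq : (⟨((q.castSucc : Fin (m+1)) : ℕ), by simpa using q.is_lt⟩ : Fin m) = q := by
      apply Fin.ext; simp
    rw [hq, Matrix.sub_apply, hProd2, Matrix.smul_apply, Matrix.one_apply]
    by_cases h : i = q <;> simp [h]
  have hM2 : ∀ i : Fin m, M i (Fin.last m) = d i.castSucc := by
    intro i
    rw [hMdef]
    simp only [Matrix.of_apply]
    rw [dif_neg (by simp), hProd]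
  -- splitting sums against A
  have hsplit : ∀ (i : Fin m) (f : Fin m → ℝ),
      (∑ q, A i q * f q) = (d i.castSucc)⁻¹ * f i + (d (Fin.last m))⁻¹ * ∑ q, f q := by
    intro i f
    have h1 : ∀ q, A i q * f q
        = (if i = q then (d i.castSucc)⁻¹ * f q else 0) + (d (Fin.last m))⁻¹ * f q := by
      intro q
      rw [hA]
      by_cases h : i = q <;> simp [h] <;> ring
    rw [Finset.sum_congr rfl (fun q _ => h1 q), Finset.sum_add_distrib,
      Finset.sum_ite_eq, if_pos (Finset.mem_univ i), ← Finset.mul_sum]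
  -- the key identity A * M = t • (Snᵀ E⁻¹)
  have hkey : A * M = t • ((Sn m)ᵀ * E⁻¹) := by
    ext i k
    rw [Matrix.mul_apply, Matrix.smul_apply, hB, hsplit]
    rcases Fin.eq_castSucc_or_eq_last k with ⟨q, rfl⟩ | rfl
    · have hSS : ∑ q' : Fin m, M q' q.castSucc = -d (Fin.last m) := by
        rw [Finset.sum_congr rfl (fun q' _ => hM1 q' q), Finset.sum_sub_distrib,
          Finset.sum_ite_eq', if_pos (Finset.mem_univ q), hsum]
        ring
      rw [hSS, hM1, hSn1]
      by_cases h : i = q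
      · subst h
        rw [if_pos rfl, if_pos rfl]
        field_simp [hne]
        rw [smul_eq_mul, one_div, mul_neg, mul_neg, mul_left_comm, mul_inv_cancel₀ (hne _)]; ring
      · rw [if_neg h, if_neg fun hh => h hh.symm]
        field_simp [hne]
        simp
    · have hSS : ∑ q' : Fin m, M q' (Fin.last m) = t - d (Fin.last m) := by
        rw [Finset.sum_congr rfl (fun q' _ => hM2 q'), hsum]
      rw [hSS, hM2, hSn2]
      field_simp [hne]
      rw [smul_eq_mul, one_div, mul_left_comm, mul_inv_cancel₀ (hne _)]; ring
  -- explicit inverse of A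
  set C : Matrix (Fin m) (Fin m) ℝ :=
    Matrix.of fun j k => (if j = k then d j.castSucc else 0)
      - d j.castSucc * d k.castSucc / t with hCdef
  have hCsum : ∀ l : Fin m, ∑ q, C q l = d (Fin.last m) * d l.castSucc / t := by
    intro l
    simp only [hCdef, Matrix.of_apply]
    rw [Finset.sum_sub_distrib, Finset.sum_ite_eq', if_pos (Finset.mem_univ l)]
    have h2 : ∑ q : Fin m, d q.castSucc * d l.castSucc / t
        = (∑ q : Fin m, d q.castSucc) * (d l.castSucc / t) := by
      rw [Finset.sum_mul]
      simp [mul_div_assoc]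
    rw [h2, hsum]
    field_simp [hne]
    ring
  have hAC : A * C = 1 := by
    ext i l
    rw [Matrix.mul_apply, hsplit, hCsum, Matrix.one_apply]
    simp only [hCdef, Matrix.of_apply]
    by_cases h : i = l
    · subst h
      rw [if_pos rfl, if_pos rfl]
      field_simp [hne]
      ring
    · rw [if_neg h, if_neg h]
      field_simp [hne]
      ring
  have hAinv : A⁻¹ = C := Matrix.inv_eq_right_inv hAC
  have hCA : C * A = 1 := mul_eq_one_comm.mp hAC
  show t • SnL m E = M
  have hSnL : SnL m E = A⁻¹ * ((Sn m)ᵀ * E⁻¹) := by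
    rw [SnL, hAdef, Matrix.mul_assoc]
  rw [hSnL, ← Matrix.mul_smul, ← hkey, hAinv, ← Matrix.mul_assoc, hCA, Matrix.one_mul]
end

section
/- Let n ≥ 2, let E ∈ ℝ^{n×n} be diagonal positive definite, and let Sₙ and Sₙᴸ be defined as Sₙ = [−I_{n−1}; 1_{n−1}ᵀ] ∈ ℝ^{n×(n−1)} and Sₙᴸ = (Sₙᵀ E^{−1} Sₙ)^{−1} Sₙᵀ E^{−1}. Then for every matrix D ∈ ℝ^{n×k} whose columns each sum to zero (i.e., 1_nᵀ D = 0), one has Sₙᴸ D = −[I_{n−1} 0] D, i.e., Sₙᴸ D equals the negative of the matrix formed by the first n−1 rows of D. In particular, Sₙᴸ D does not depend on E. (Proposition 1, equation (30).) -/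
open Matrix

lemma Sn_conjTranspose (m : ℕ) : (Sn m)ᴴ = (Sn m)ᵀ := by
  ext i j; simp [conjTranspose_apply]

lemma Sn_mulVec_eq_zero (m : ℕ) (x : Fin m → ℝ) (h : Sn m *ᵥ x = 0) : x = 0 := by
  funext j
  have hj := congrFun h j.castSucc
  simp only [mulVec, dotProduct, Sn, Matrix.of_apply, Pi.zero_apply, Fin.coe_castSucc] at hj
  have hlt : (j : ℕ) ≠ m := Nat.ne_of_lt j.isLt
  rw [Finset.sum_eq_single j] at hj
  · rw [if_neg hlt, if_pos rfl] at hj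
    show x j = 0
    linarith
  · intro b _ hb
    rw [if_neg hlt, if_neg (show ¬(j : ℕ) = (b : ℕ) from fun h' => hb (Fin.ext h'.symm)),
      zero_mul]
  · simp

lemma M_posDef (m : ℕ) (E : Matrix (Fin (m + 1)) (Fin (m + 1)) ℝ) (hpd : E.PosDef) :
    ((Sn m)ᵀ * E⁻¹ * Sn m).PosDef := by
  have hinv : E⁻¹.PosDef := hpd.inv
  refine PosDef.of_dotProduct_mulVec_pos ?_ ?_
  · rw [← Sn_conjTranspose]
    exact isHermitian_conjTranspose_mul_mul _ hinv.1
  · intro x hx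
    have hSx : Sn m *ᵥ x ≠ 0 := fun h => hx (Sn_mulVec_eq_zero m x h)
    have h2 := hinv.dotProduct_mulVec_pos hSx
    rw [← mulVec_mulVec, ← mulVec_mulVec, dotProduct_mulVec, star_trivial,
      vecMul_transpose]
    rwa [star_trivial] at h2

lemma D_factor (m k : ℕ) (D : Matrix (Fin (m + 1)) (Fin k) ℝ)
    (hD : (onesCol (m + 1))ᵀ * D = 0) :
    D = Sn m * (-(D.submatrix Fin.castSucc id)) := by
  ext i c
  have hcol : ∑ i, D i c = 0 := by
    have := congrFun (congrFun hD 0) c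
    simpa [onesCol, Matrix.mul_apply] using this
  induction i using Fin.lastCases with
  | last =>
    have hlast : ((Fin.last m : Fin (m+1)) : ℕ) = m := rfl
    simp only [Matrix.mul_apply, Sn, Matrix.of_apply, hlast, if_pos rfl, one_mul,
      Matrix.neg_apply, Matrix.submatrix_apply, id]
    rw [Fin.sum_univ_castSucc (fun i => D i c)] at hcol
    simp only [if_true, one_mul, Finset.sum_neg_distrib, ← Finset.sum_neg_distrib]
    simp only [Finset.sum_neg_distrib]
    linarith
  | cast j =>
    have hlt : (j : ℕ) ≠ m := Nat.ne_of_lt j.isLt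
    simp only [Matrix.mul_apply, Sn, Matrix.of_apply, Fin.coe_castSucc,
      Matrix.neg_apply, Matrix.submatrix_apply, id]
    rw [Finset.sum_eq_single j]
    · rw [if_neg hlt, if_pos rfl]; ring
    · intro b _ hb
      rw [if_neg hlt, if_neg (show ¬(j : ℕ) = (b : ℕ) from fun h' => hb (Fin.ext h'.symm)),
        zero_mul]
    · simp

/-- Proposition 1, equation (30): if the columns of `D` each sum to zero
(`1ᵀ D = 0`), then `Sₙᴸ D = −[I_{n−1} 0] D`, i.e. `Sₙᴸ D` is the negative of the
matrix formed by the first `n−1` rows of `D`; in particular it does not depend on `E`. -/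
theorem SnL_mul_incidence (m k : ℕ) (hm : 1 ≤ m)
    (E : Matrix (Fin (m + 1)) (Fin (m + 1)) ℝ) (hdiag : E.IsDiag) (hpd : E.PosDef)
    (D : Matrix (Fin (m + 1)) (Fin k) ℝ)
    (hD : (onesCol (m + 1))ᵀ * D = 0) :
    SnL m E * D = -(D.submatrix Fin.castSucc id) := by
  have hM := M_posDef m E hpd
  have hMu : IsUnit ((Sn m)ᵀ * E⁻¹ * Sn m).det := hM.isUnit.map detMonoidHom
  set X := -(D.submatrix Fin.castSucc id) with hX
  rw [SnL]
  conv_lhs => rw [D_factor m k D hD, ← hX]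
  calc ((Sn m)ᵀ * E⁻¹ * Sn m)⁻¹ * (Sn m)ᵀ * E⁻¹ * (Sn m * X)
      = ((Sn m)ᵀ * E⁻¹ * Sn m)⁻¹ * ((Sn m)ᵀ * E⁻¹ * Sn m) * X := by
        simp only [Matrix.mul_assoc]
    _ = X := by rw [Matrix.nonsing_inv_mul _ hMu, Matrix.one_mul]
end

section
/- Let n, r ≥ 2, let E ∈ ℝ^{n×n} and Ê ∈ ℝ^{r×r} be diagonal positive definite, and let L ∈ ℝ^{n×n} and L̂ ∈ ℝ^{r×r} satisfy L 1_n = 0, 1_nᵀ L = 0, L̂ 1_r = 0, and 1_rᵀ L̂ = 0. With Sₙ, Sₙᴸ, S_r, S_rᴸ and the invertible matrix T defined as in the paper (T = [ (1/trace(E))1_n , 0 , E^{−1}Sₙ , 0 ; 0 , (1/trace(Ê))1_r , 0 , Ê^{−1}S_r ], T^{−1} = [ 1_nᵀE , 0 ; 0 , 1_rᵀÊ ; SₙᴸE , 0 ; 0 , S_rᴸÊ ]), let A_e = blockdiag(−E^{−1}L, −Ê^{−1}L̂) ∈ ℝ^{(n+r)×(n+r)}. Then T^{−1} A_e T = blockdiag(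 0_{2×2} , Ā_e ), where Ā_e = blockdiag( −Sₙᴸ L E^{−1} Sₙ , −S_rᴸ L̂ Ê^{−1} S_r ) ∈ ℝ^{m×m} with m = n + r − 2. -/
open Matrix

/-- The similarity transformation `T` from the proof of Lemma 1 (with `n = a+1`, `r = b+1`). -/
noncomputable def Tmat (a b : ℕ) (E : Matrix (Fin (a + 1)) (Fin (a + 1)) ℝ)
    (Eh : Matrix (Fin (b + 1)) (Fin (b + 1)) ℝ) :
    Matrix (Fin (a + 1) ⊕ Fin (b + 1)) ((Fin 1 ⊕ Fin 1) ⊕ (Fin a ⊕ Fin b)) ℝ :=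
  fromBlocks
    (fromCols ((E.trace)⁻¹ • onesCol (a + 1)) 0)
    (fromCols (E⁻¹ * Sn a) 0)
    (fromCols 0 ((Eh.trace)⁻¹ • onesCol (b + 1)))
    (fromCols 0 (Eh⁻¹ * Sn b))

/-- The inverse `T⁻¹` of the similarity transformation `T`. -/
noncomputable def Tmat' (a b : ℕ) (E : Matrix (Fin (a + 1)) (Fin (a + 1)) ℝ)
    (Eh : Matrix (Fin (b + 1)) (Fin (b + 1)) ℝ) :
    Matrix ((Fin 1 ⊕ Fin 1) ⊕ (Fin a ⊕ Fin b)) (Fin (a + 1) ⊕ Fin (b + 1)) ℝ :=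
  fromBlocks
    (fromRows ((onesCol (a + 1))ᵀ * E) 0)
    (fromRows 0 ((onesCol (b + 1))ᵀ * Eh))
    (fromRows (SnL a E * E) 0)
    (fromRows 0 (SnL b Eh * Eh))

section Helpers
variable {k m : ℕ}

lemma top_zero (E L : Matrix (Fin (k + 1)) (Fin (k + 1)) ℝ)
    (hE : E * E⁻¹ = 1) (h1L : (onesCol (k+1))ᵀ * L = 0) :
    (onesCol (k+1))ᵀ * E * -(E⁻¹ * L) = 0 := by
  rw [Matrix.mul_neg, Matrix.mul_assoc ((onesCol (k+1))ᵀ), ← Matrix.mul_assoc E, hE,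
    Matrix.one_mul, h1L, neg_zero]

lemma bot_eq (E L : Matrix (Fin (k + 1)) (Fin (k + 1)) ℝ)
    (SL : Matrix (Fin m) (Fin (k+1)) ℝ) (hE : E * E⁻¹ = 1) :
    SL * E * -(E⁻¹ * L) = -(SL * L) := by
  rw [Matrix.mul_neg, Matrix.mul_assoc SL, ← Matrix.mul_assoc E, hE, Matrix.one_mul]

lemma bot_ones (L : Matrix (Fin (k + 1)) (Fin (k + 1)) ℝ)
    (SL : Matrix (Fin m) (Fin (k+1)) ℝ) (c : ℝ) (hL1 : L * onesCol (k+1) = 0) :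
    -(SL * L) * (c • onesCol (k+1)) = 0 := by
  rw [Matrix.mul_smul, Matrix.neg_mul, Matrix.mul_assoc, hL1, Matrix.mul_zero,
    neg_zero, smul_zero]

end Helpers


/-- Block-diagonalization of the error state matrix
`A_e = blockdiag(−E⁻¹L, −Ê⁻¹L̂)`:
`T⁻¹ A_e T = blockdiag(0₂ₓ₂, Ā_e)` with
`Ā_e = blockdiag(−SₙᴸLE⁻¹Sₙ, −SᵣᴸL̂Ê⁻¹Sᵣ)`. -/
theorem error_state_matrix_block_diagonalization (a b : ℕ) (ha : 1 ≤ a) (hb : 1 ≤ b)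
    (E : Matrix (Fin (a + 1)) (Fin (a + 1)) ℝ) (hEdiag : E.IsDiag) (hEpd : E.PosDef)
    (Eh : Matrix (Fin (b + 1)) (Fin (b + 1)) ℝ) (hEhdiag : Eh.IsDiag) (hEhpd : Eh.PosDef)
    (L : Matrix (Fin (a + 1)) (Fin (a + 1)) ℝ)
    (hL1 : L * onesCol (a + 1) = 0) (h1L : (onesCol (a + 1))ᵀ * L = 0)
    (Lh : Matrix (Fin (b + 1)) (Fin (b + 1)) ℝ)
    (hLh1 : Lh * onesCol (b + 1) = 0) (h1Lh : (onesCol (b + 1))ᵀ * Lh = 0) :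
    Tmat' a b E Eh * fromBlocks (-(E⁻¹ * L)) 0 0 (-(Eh⁻¹ * Lh)) * Tmat a b E Eh =
      fromBlocks 0 0 0
        (fromBlocks (-(SnL a E * L * E⁻¹ * Sn a)) 0 0 (-(SnL b Eh * Lh * Eh⁻¹ * Sn b))) := by
  have hE : E * E⁻¹ = 1 := Matrix.mul_nonsing_inv E hEpd.det_pos.ne'.isUnit
  have hEh : Eh * Eh⁻¹ = 1 := Matrix.mul_nonsing_inv Eh hEhpd.det_pos.ne'.isUnit
  have step1 : Tmat' a b E Eh * fromBlocks (-(E⁻¹ * L)) 0 0 (-(Eh⁻¹ * Lh)) =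
      fromBlocks 0 0 (fromRows (-(SnL a E * L)) 0) (fromRows 0 (-(SnL b Eh * Lh))) := by
    rw [Tmat', fromBlocks_multiply]
    simp only [Matrix.mul_zero, Matrix.zero_mul, add_zero, zero_add, fromRows_mul,
      top_zero E L hE h1L, top_zero Eh Lh hEh h1Lh,
      bot_eq E L _ hE, bot_eq Eh Lh _ hEh, fromRows_zero]
  rw [step1, Tmat, fromBlocks_multiply]
  simp only [Matrix.mul_zero, Matrix.zero_mul, add_zero, zero_add,
    fromRows_mul_fromCols, Matrix.fromBlocks_add,
    bot_ones L _ _ hL1, bot_ones Lh _ _ hLh1, Matrix.fromBlocks_zero,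
    Matrix.neg_mul, Matrix.mul_assoc]
end

section
/- Let n, r ≥ 2, p, q ≥ 1, and m = n + r − 2. Let E ∈ ℝ^{n×n}, Ê ∈ ℝ^{r×r} be diagonal positive definite; let L ∈ ℝ^{n×n}, L̂ ∈ ℝ^{r×r} satisfy L1_n = 0, 1_nᵀL = 0, L̂1_r = 0, 1_rᵀL̂ = 0; let F ∈ ℝ^{n×p}, F̂ ∈ ℝ^{r×p}, H ∈ ℝ^{q×n}, Ĥ ∈ ℝ^{q×r}, and α, β ∈ ℝ. Define A_e = blockdiag(−E^{−1}L, −Ê^{−1}L̂), B_e = [E^{−1}F ; βÊ^{−1}F̂], C_e = [H , −αĤ], and, with Sₙ, Sₙᴸ, S_r, S_rᴸ as in the paper, Ā_e = blockdiag(−SₙᴸLE^{−1}Sₙ, −S_rᴸL̂Ê^{−1}S_r), B̄_e = [SₙᴸF ; βS_rᴸF̂], C̄_e = [HE^{−1}Sₙ , −αĤÊ^{−1}S_r]. Then for every complex number s with s ≠ 0 and sI_m − Ā_e invertible, the matrix sI_{n+r} − A_e is invertible and C_e (sI_{n+r} − A_e)^{−1} B_e = (1/s)·( (1/trace(E)) H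 1_n 1_nᵀ F − (αβ/trace(Ê)) Ĥ 1_r 1_rᵀ F̂ ) + C̄_e (sI_m − Ā_e)^{−1} B̄_e. -/
open Matrix

/-- Entrywise complexification of a real matrix. -/
def cmap {α β : Type*} (A : Matrix α β ℝ) : Matrix α β ℂ := A.map fun x => (x : ℂ)

lemma onesT_mul_Sn (m : ℕ) : (onesCol (m+1))ᵀ * Sn m = 0 := by
  ext i j
  simp only [Matrix.mul_apply, onesCol, Sn, transpose_apply, of_apply, one_mul,
    Matrix.zero_apply]
  rw [Fin.sum_univ_castSucc]
  have h1 : ∀ x : Fin m, ((Fin.castSucc x : Fin (m+1)) : ℕ) ≠ m := fun x => Nat.ne_of_lt x.2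
  have h2 : ((Fin.last m : Fin (m+1)) : ℕ) = m := rfl
  simp only [h2, if_true, Fin.coe_castSucc]
  rw [Finset.sum_congr rfl (fun (x : Fin m) _ => if_neg (Nat.ne_of_lt x.2))]
  have : ∀ x : Fin m, ((if (x : ℕ) = (j : ℕ) then (-1:ℝ) else 0)) = if x = j then (-1:ℝ) else 0 := by
    intro x; simp [Fin.ext_iff]
  rw [Finset.sum_congr rfl (fun x _ => this x), Finset.sum_ite_eq' Finset.univ j (fun _ => (-1:ℝ))]
  simp

lemma SnT_mul_ones (m : ℕ) : (Sn m)ᵀ * onesCol (m+1) = 0 := by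
  have := congrArg Matrix.transpose (onesT_mul_Sn m)
  simpa [Matrix.transpose_mul] using this

lemma Sn_mulVec_injective (m : ℕ) (x : Fin m → ℝ) (hx : (Sn m) *ᵥ x = 0) : x = 0 := by
  funext i
  have h := congrFun hx (Fin.castSucc i)
  simp only [Matrix.mulVec, dotProduct, Sn, of_apply, Pi.zero_apply] at h
  have h1 : ((Fin.castSucc i : Fin (m+1)) : ℕ) ≠ m := Nat.ne_of_lt i.2
  rw [Finset.sum_congr rfl (fun y _ => by rw [if_neg h1])] at h
  have : ∀ y : Fin m, ((if ((Fin.castSucc i : Fin (m+1)) : ℕ) = (y : ℕ) then (-1:ℝ) else 0) * x y)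
      = if y = i then -x y else 0 := by
    intro y
    by_cases hy : y = i
    · simp [hy]
    · rw [if_neg hy, if_neg (fun hc => hy (Fin.ext hc.symm)), zero_mul]
  rw [Finset.sum_congr rfl (fun y _ => this y), Finset.sum_ite_eq' Finset.univ i fun y => -x y] at h
  simpa using h

lemma trace_pos' {n : Type*} [Fintype n] [Nonempty n] [DecidableEq n]
    {E : Matrix n n ℝ} (h : E.PosDef) : 0 < E.trace := by
  have hd : ∀ i, 0 < E i i := by
    intro i
    have hx : (Pi.single i 1 : n → ℝ) ≠ 0 := by
      intro hc
      have := congrFun hc i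
      simp at this
    have := h.dotProduct_mulVec_pos (x := Pi.single i 1) hx
    simpa [Matrix.mulVec_single, dotProduct, Pi.single_apply, ite_mul] using this
  exact Finset.sum_pos (fun i _ => hd i) Finset.univ_nonempty

lemma G_posDef (m : ℕ) (E : Matrix (Fin (m+1)) (Fin (m+1)) ℝ) (hEpd : E.PosDef) :
    ((Sn m)ᵀ * E⁻¹ * Sn m).PosDef := by
  have hEinv := hEpd.inv
  refine Matrix.PosDef.of_dotProduct_mulVec_pos ?_ ?_
  · have := Matrix.isHermitian_conjTranspose_mul_mul (Sn m) hEinv.isHermitian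
    simpa using this
  · intro x hx
    have hSx : (Sn m) *ᵥ x ≠ 0 := fun hc => hx (Sn_mulVec_injective m x hc)
    have h2 := hEinv.dotProduct_mulVec_pos hSx
    have key : star x ⬝ᵥ (((Sn m)ᵀ * E⁻¹ * Sn m) *ᵥ x)
        = star ((Sn m) *ᵥ x) ⬝ᵥ (E⁻¹ *ᵥ ((Sn m) *ᵥ x)) := by
      simp only [star_trivial, ← Matrix.mulVec_mulVec, Matrix.dotProduct_mulVec,
        Matrix.vecMul_transpose, Matrix.vecMul_vecMul]
    rw [key]
    exact h2

lemma SnL_mul_Sn (m : ℕ) (E : Matrix (Fin (m+1)) (Fin (m+1)) ℝ) (hEpd : E.PosDef) :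
    SnL m E * Sn m = 1 := by
  have hG := G_posDef m E hEpd
  have h : SnL m E * Sn m = ((Sn m)ᵀ * E⁻¹ * Sn m)⁻¹ * ((Sn m)ᵀ * E⁻¹ * Sn m) := by
    simp [SnL, Matrix.mul_assoc]
  rw [h, Matrix.nonsing_inv_mul _ hG.det_pos.ne'.isUnit]

lemma SnL_mul_E_ones (m : ℕ) (E : Matrix (Fin (m+1)) (Fin (m+1)) ℝ) (hEpd : E.PosDef) :
    SnL m E * (E * onesCol (m+1)) = 0 := by
  have h : SnL m E * (E * onesCol (m+1))
      = ((Sn m)ᵀ * E⁻¹ * Sn m)⁻¹ * ((Sn m)ᵀ * ((E⁻¹ * E) * onesCol (m+1))) := by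
    simp [SnL, Matrix.mul_assoc]
  rw [h, Matrix.nonsing_inv_mul _ ((Matrix.isUnit_iff_isUnit_det E).mp hEpd.isUnit),
    Matrix.one_mul, SnT_mul_ones, Matrix.mul_zero]

lemma onesT_E_ones (m : ℕ) (E : Matrix (Fin (m+1)) (Fin (m+1)) ℝ) (hEdiag : E.IsDiag) :
    (onesCol (m+1))ᵀ * (E * onesCol (m+1)) = E.trace • (1 : Matrix (Fin 1) (Fin 1) ℝ) := by
  ext i j
  have hij : i = j := Subsingleton.elim i j
  simp only [Matrix.mul_apply, onesCol, Matrix.transpose_apply, Matrix.of_apply, one_mul,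
    mul_one, Matrix.smul_apply, Matrix.one_apply, hij, if_true, smul_eq_mul]
  rw [Matrix.trace]
  congr 1
  funext x
  rw [Finset.sum_eq_single x (fun y _ hy => hEdiag (Ne.symm hy)) (by simp)]
  rfl

lemma Sn_mul_SnL (m : ℕ) (E : Matrix (Fin (m+1)) (Fin (m+1)) ℝ)
    (hEdiag : E.IsDiag) (hEpd : E.PosDef) :
    Sn m * SnL m E = 1 - (E.trace)⁻¹ • (E * onesCol (m+1) * (onesCol (m+1))ᵀ) := by
  have htr : E.trace ≠ 0 := (trace_pos' hEpd).ne'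
  have hTT' : fromRows (SnL m E) ((E.trace)⁻¹ • (onesCol (m+1))ᵀ) *
      fromCols (Sn m) (E * onesCol (m+1)) = 1 := by
    rw [Matrix.fromRows_mul_fromCols, SnL_mul_Sn m E hEpd, SnL_mul_E_ones m E hEpd,
      Matrix.smul_mul, onesT_mul_Sn, smul_zero, Matrix.smul_mul, onesT_E_ones m E hEdiag,
      smul_smul, inv_mul_cancel₀ htr, one_smul, Matrix.fromBlocks_one]
  have hT'T := (Matrix.fromCols_mul_fromRows_eq_one_comm finSumFinEquiv.symm
    (Sn m) (E * onesCol (m+1)) (SnL m E) ((E.trace)⁻¹ • (onesCol (m+1))ᵀ)).mpr hTT'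
  rw [Matrix.fromCols_mul_fromRows] at hT'T
  have h2 : (E * onesCol (m+1)) * ((E.trace)⁻¹ • (onesCol (m+1))ᵀ)
      = (E.trace)⁻¹ • (E * onesCol (m+1) * (onesCol (m+1))ᵀ) := by
    rw [Matrix.mul_smul]
  rw [h2] at hT'T
  exact eq_sub_of_add_eq hT'T

lemma cmap_mul {α γ : Type*} {β : Type*} [Fintype β] (A : Matrix α β ℝ) (B : Matrix β γ ℝ) :
    cmap (A * B) = cmap A * cmap B := by
  have : cmap (A * B) = (A * B).map (Complex.ofRealHom : ℝ →+* ℂ) := rfl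
  rw [this, Matrix.map_mul]; rfl

lemma cmap_smul {α β : Type*} (r : ℝ) (A : Matrix α β ℝ) :
    cmap (r • A) = (r : ℂ) • cmap A := by
  ext i j; simp [cmap]

lemma cmap_add {α β : Type*} (A B : Matrix α β ℝ) : cmap (A + B) = cmap A + cmap B := by
  ext i j; simp [cmap]

lemma cmap_sub {α β : Type*} (A B : Matrix α β ℝ) : cmap (A - B) = cmap A - cmap B := by
  ext i j; simp [cmap]

lemma cmap_neg {α β : Type*} (A : Matrix α β ℝ) : cmap (-A) = -cmap A := by
  ext i j; simp [cmap]

lemma cmap_zero {α β : Type*} : cmap (0 : Matrix α β ℝ) = 0 := by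
  ext i j; simp [cmap]

lemma cmap_one {α : Type*} [DecidableEq α] : cmap (1 : Matrix α α ℝ) = 1 := by
  ext i j; simp [cmap, Matrix.one_apply, apply_ite (fun x : ℝ => (x : ℂ))]

lemma cmap_fromBlocks {α β γ δ : Type*} (A : Matrix α β ℝ) (B : Matrix α δ ℝ)
    (C : Matrix γ β ℝ) (D : Matrix γ δ ℝ) :
    cmap (fromBlocks A B C D) = fromBlocks (cmap A) (cmap B) (cmap C) (cmap D) :=
  Matrix.fromBlocks_map A B C D _

lemma cmap_fromColumns {α β γ : Type*} (A : Matrix α β ℝ) (B : Matrix α γ ℝ) :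
    cmap (fromCols A B) = fromCols (cmap A) (cmap B) := by
  ext i j; cases j <;> simp [cmap]

lemma cmap_fromRows {α β γ : Type*} (A : Matrix α γ ℝ) (B : Matrix β γ ℝ) :
    cmap (fromRows A B) = fromRows (cmap A) (cmap B) := by
  ext i j; cases i <;> simp [cmap]

lemma block_key (m : ℕ) (E L : Matrix (Fin (m+1)) (Fin (m+1)) ℝ)
    (hEdiag : E.IsDiag) (hEpd : E.PosDef)
    (hL1 : L * onesCol (m+1) = 0) (h1L : (onesCol (m+1))ᵀ * L = 0)
    (s : ℂ) (hs : s ≠ 0)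
    (hX : IsUnit (s • (1 : Matrix (Fin m) (Fin m) ℂ) - cmap (-(SnL m E * L * E⁻¹ * Sn m)))) :
    (s • (1 : Matrix (Fin (m+1)) (Fin (m+1)) ℂ) - cmap (-(E⁻¹ * L))) *
      ((s * (E.trace : ℂ))⁻¹ • cmap (onesCol (m+1) * (onesCol (m+1))ᵀ * E) +
        cmap (E⁻¹ * Sn m) *
          (s • (1 : Matrix (Fin m) (Fin m) ℂ) - cmap (-(SnL m E * L * E⁻¹ * Sn m)))⁻¹ *
          cmap (SnL m E * E)) = 1 ∧
    ((s * (E.trace : ℂ))⁻¹ • cmap (onesCol (m+1) * (onesCol (m+1))ᵀ * E) +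
        cmap (E⁻¹ * Sn m) *
          (s • (1 : Matrix (Fin m) (Fin m) ℂ) - cmap (-(SnL m E * L * E⁻¹ * Sn m)))⁻¹ *
          cmap (SnL m E * E)) *
      (s • (1 : Matrix (Fin (m+1)) (Fin (m+1)) ℂ) - cmap (-(E⁻¹ * L))) = 1 := by
  have hdetE : IsUnit E.det := (Matrix.isUnit_iff_isUnit_det E).mp hEpd.isUnit
  have hEiE : E⁻¹ * E = 1 := Matrix.nonsing_inv_mul E hdetE
  have hEEi : E * E⁻¹ = 1 := Matrix.mul_nonsing_inv E hdetE
  have htr : E.trace ≠ 0 := (trace_pos' hEpd).ne'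
  have ht : (E.trace : ℂ) ≠ 0 := Complex.ofReal_ne_zero.mpr htr
  -- applied forms
  have hEiE' : ∀ {β : Type} (X : Matrix (Fin (m+1)) β ℝ), E⁻¹ * (E * X) = X := by
    intro β X; rw [← Matrix.mul_assoc, hEiE, Matrix.one_mul]
  have hEEi' : ∀ {β : Type} (X : Matrix (Fin (m+1)) β ℝ), E * (E⁻¹ * X) = X := by
    intro β X; rw [← Matrix.mul_assoc, hEEi, Matrix.one_mul]
  have h1L' : ∀ {β : Type} (X : Matrix (Fin (m+1)) β ℝ),
      (onesCol (m+1))ᵀ * (L * X) = 0 := by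
    intro β X; rw [← Matrix.mul_assoc, h1L, Matrix.zero_mul]
  have hL1' : ∀ {β : Type} (X : Matrix (Fin 1) β ℝ),
      L * (onesCol (m+1) * X) = 0 := by
    intro β X; rw [← Matrix.mul_assoc, hL1, Matrix.zero_mul]
  have hSSL' : ∀ {β : Type} (X : Matrix (Fin (m+1)) β ℝ),
      Sn m * (SnL m E * X) =
        X - E.trace⁻¹ • (E * (onesCol (m+1) * ((onesCol (m+1))ᵀ * X))) := by
    intro β X
    rw [← Matrix.mul_assoc, Sn_mul_SnL m E hEdiag hEpd, Matrix.sub_mul, Matrix.one_mul,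
      Matrix.smul_mul]
    simp only [Matrix.mul_assoc]
  -- real identities
  have R1 : (E⁻¹ * Sn m) * (SnL m E * L * E⁻¹ * Sn m) = (E⁻¹ * L) * (E⁻¹ * Sn m) := by
    simp only [Matrix.mul_assoc]
    simp only [hSSL', Matrix.mul_sub, Matrix.sub_mul, Matrix.mul_smul, Matrix.smul_mul,
      h1L', hL1', Matrix.mul_zero, Matrix.zero_mul, smul_zero, sub_zero]
  have R2 : (SnL m E * L * E⁻¹ * Sn m) * (SnL m E * E) = (SnL m E * E) * (E⁻¹ * L) := by
    simp only [Matrix.mul_assoc]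
    simp only [hSSL', hEiE', hEEi', Matrix.mul_sub, Matrix.mul_smul,
      hL1', Matrix.mul_zero, smul_zero, sub_zero, hEiE, Matrix.mul_one]
  have R3 : (E⁻¹ * L) * (onesCol (m+1) * (onesCol (m+1))ᵀ * E) = 0 := by
    simp only [Matrix.mul_assoc, hL1', Matrix.mul_zero]
  have R4 : (onesCol (m+1) * (onesCol (m+1))ᵀ * E) * (E⁻¹ * L) = 0 := by
    simp only [Matrix.mul_assoc, hEEi', h1L, Matrix.mul_zero]
  have R5 : (E⁻¹ * Sn m) * (SnL m E * E) =
      1 - E.trace⁻¹ • (onesCol (m+1) * (onesCol (m+1))ᵀ * E) := by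
    simp only [Matrix.mul_assoc]
    simp only [hSSL', Matrix.mul_sub, Matrix.mul_smul, hEiE, hEiE']
  set X := s • (1 : Matrix (Fin m) (Fin m) ℂ) - cmap (-(SnL m E * L * E⁻¹ * Sn m)) with hXdef
  have hXu : IsUnit X.det := (Matrix.isUnit_iff_isUnit_det _).mp hX
  have hXXi : X * X⁻¹ = 1 := Matrix.mul_nonsing_inv _ hXu
  have hXiX : X⁻¹ * X = 1 := Matrix.nonsing_inv_mul _ hXu
  set cK := cmap (onesCol (m+1) * (onesCol (m+1))ᵀ * E) with hcK
  set cS' := cmap (E⁻¹ * Sn m) with hcS'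
  set cSE := cmap (SnL m E * E) with hcSE
  set cA' := cmap (E⁻¹ * L) with hcA'
  have hN : s • (1 : Matrix (Fin (m+1)) (Fin (m+1)) ℂ) - cmap (-(E⁻¹ * L))
      = s • 1 + cA' := by
    rw [cmap_neg, sub_neg_eq_add, hcA']
  have hXalt : X = s • 1 + cmap (SnL m E * L * E⁻¹ * Sn m) := by
    rw [hXdef, cmap_neg, sub_neg_eq_add]
  have key1 : (s • (1 : Matrix (Fin (m+1)) (Fin (m+1)) ℂ) + cA') * cS' = cS' * X := by
    rw [hXalt, Matrix.add_mul, Matrix.mul_add, Matrix.smul_mul, Matrix.one_mul,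
      Matrix.mul_smul, Matrix.mul_one, hcA', hcS', ← cmap_mul, ← cmap_mul, R1]
  have key2 : cSE * (s • (1 : Matrix (Fin (m+1)) (Fin (m+1)) ℂ) + cA') = X * cSE := by
    rw [hXalt, Matrix.add_mul, Matrix.mul_add, Matrix.smul_mul, Matrix.one_mul,
      Matrix.mul_smul, Matrix.mul_one, hcA', hcSE, ← cmap_mul, ← cmap_mul, R2]
  have hprod : cS' * cSE = 1 - (E.trace : ℂ)⁻¹ • cK := by
    rw [hcS', hcSE, ← cmap_mul, R5, cmap_sub, cmap_one, cmap_smul, Complex.ofReal_inv, hcK]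
  have hKA : cA' * cK = 0 := by rw [hcA', hcK, ← cmap_mul, R3, cmap_zero]
  have hAK : cK * cA' = 0 := by rw [hcA', hcK, ← cmap_mul, R4, cmap_zero]
  have hscal : (s * (E.trace : ℂ))⁻¹ * s = (E.trace : ℂ)⁻¹ := by
    rw [mul_inv, mul_comm, ← mul_assoc, mul_inv_cancel₀ hs, one_mul]
  constructor
  · rw [hN]
    have t1 : (s • (1 : Matrix (Fin (m+1)) (Fin (m+1)) ℂ) + cA') *
        ((s * (E.trace : ℂ))⁻¹ • cK) = (E.trace : ℂ)⁻¹ • cK := by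
      rw [Matrix.mul_smul, Matrix.add_mul, Matrix.smul_mul, Matrix.one_mul, hKA, add_zero,
        smul_smul, hscal]
    have t2 : (s • (1 : Matrix (Fin (m+1)) (Fin (m+1)) ℂ) + cA') * (cS' * X⁻¹ * cSE)
        = 1 - (E.trace : ℂ)⁻¹ • cK := by
      calc (s • (1 : Matrix (Fin (m+1)) (Fin (m+1)) ℂ) + cA') * (cS' * X⁻¹ * cSE)
          = ((s • (1 : Matrix (Fin (m+1)) (Fin (m+1)) ℂ) + cA') * cS') * (X⁻¹ * cSE) := by
            simp only [Matrix.mul_assoc]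
        _ = cS' * (X * X⁻¹) * cSE := by rw [key1]; simp only [Matrix.mul_assoc]
        _ = cS' * cSE := by rw [hXXi, Matrix.mul_one]
        _ = 1 - (E.trace : ℂ)⁻¹ • cK := hprod
    rw [Matrix.mul_add, t1, t2]
    abel
  · have t1 : ((s * (E.trace : ℂ))⁻¹ • cK) * (s • (1 : Matrix (Fin (m+1)) (Fin (m+1)) ℂ) + cA')
        = (E.trace : ℂ)⁻¹ • cK := by
      rw [Matrix.smul_mul, Matrix.mul_add, Matrix.mul_smul, Matrix.mul_one, hAK, add_zero,
        smul_smul, hscal]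
    have t2 : (cS' * X⁻¹ * cSE) * (s • (1 : Matrix (Fin (m+1)) (Fin (m+1)) ℂ) + cA')
        = 1 - (E.trace : ℂ)⁻¹ • cK := by
      calc (cS' * X⁻¹ * cSE) * (s • (1 : Matrix (Fin (m+1)) (Fin (m+1)) ℂ) + cA')
          = cS' * (X⁻¹ * (cSE * (s • (1 : Matrix (Fin (m+1)) (Fin (m+1)) ℂ) + cA'))) := by
            simp only [Matrix.mul_assoc]
        _ = cS' * (X⁻¹ * (X * cSE)) := by rw [key2]
        _ = cS' * ((X⁻¹ * X) * cSE) := by simp only [Matrix.mul_assoc]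
        _ = cS' * cSE := by rw [hXiX, Matrix.one_mul]
        _ = 1 - (E.trace : ℂ)⁻¹ • cK := hprod
    rw [hN, Matrix.add_mul, t1, t2]
    abel

lemma blockify {α β : Type*} [DecidableEq α] [DecidableEq β] [Fintype α] [Fintype β]
    (s : ℂ) (A : Matrix α α ℝ) (D : Matrix β β ℝ) :
    s • (1 : Matrix (α ⊕ β) (α ⊕ β) ℂ) - cmap (fromBlocks A 0 0 D) =
      fromBlocks (s • 1 - cmap A) 0 0 (s • 1 - cmap D) := by
  ext i j
  rcases i with i | i <;> rcases j with j | j <;>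
    simp [cmap, Matrix.fromBlocks, Matrix.one_apply, Matrix.sub_apply, Matrix.smul_apply,
      apply_ite (fun x : ℝ => (x : ℂ))]

/-- Partial fraction decomposition of the error transfer function (proof of Lemma 1):
`C_e (sI − A_e)⁻¹ B_e = (1/s)((1/tr E) H 1 1ᵀ F − (αβ/tr Ê) Ĥ 1 1ᵀ F̂) + C̄_e (sI − Ā_e)⁻¹ B̄_e`,
and `sI − A_e` is invertible, for every `s ≠ 0` with `sI − Ā_e` invertible.
Here `n = a+1`, `r = b+1`, `m = n + r − 2 = a + b`. -/
theorem error_transfer_function_decomposition (a b p q : ℕ)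
    (ha : 1 ≤ a) (hb : 1 ≤ b) (hp : 1 ≤ p) (hq : 1 ≤ q)
    (E : Matrix (Fin (a + 1)) (Fin (a + 1)) ℝ) (hEdiag : E.IsDiag) (hEpd : E.PosDef)
    (Eh : Matrix (Fin (b + 1)) (Fin (b + 1)) ℝ) (hEhdiag : Eh.IsDiag) (hEhpd : Eh.PosDef)
    (L : Matrix (Fin (a + 1)) (Fin (a + 1)) ℝ)
    (hL1 : L * onesCol (a + 1) = 0) (h1L : (onesCol (a + 1))ᵀ * L = 0)
    (Lh : Matrix (Fin (b + 1)) (Fin (b + 1)) ℝ)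
    (hLh1 : Lh * onesCol (b + 1) = 0) (h1Lh : (onesCol (b + 1))ᵀ * Lh = 0)
    (F : Matrix (Fin (a + 1)) (Fin p) ℝ) (Fh : Matrix (Fin (b + 1)) (Fin p) ℝ)
    (H : Matrix (Fin q) (Fin (a + 1)) ℝ) (Hh : Matrix (Fin q) (Fin (b + 1)) ℝ)
    (al be : ℝ) (s : ℂ) (hs : s ≠ 0)
    (hinv : IsUnit (s • (1 : Matrix (Fin a ⊕ Fin b) (Fin a ⊕ Fin b) ℂ) -
      cmap (fromBlocks (-(SnL a E * L * E⁻¹ * Sn a)) 0 0 (-(SnL b Eh * Lh * Eh⁻¹ * Sn b))))) :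
    IsUnit (s • (1 : Matrix (Fin (a + 1) ⊕ Fin (b + 1)) (Fin (a + 1) ⊕ Fin (b + 1)) ℂ) -
      cmap (fromBlocks (-(E⁻¹ * L)) 0 0 (-(Eh⁻¹ * Lh)))) ∧
    cmap (fromCols H ((-al) • Hh)) *
        (s • (1 : Matrix (Fin (a + 1) ⊕ Fin (b + 1)) (Fin (a + 1) ⊕ Fin (b + 1)) ℂ) -
          cmap (fromBlocks (-(E⁻¹ * L)) 0 0 (-(Eh⁻¹ * Lh))))⁻¹ *
        cmap (fromRows (E⁻¹ * F) (be • (Eh⁻¹ * Fh))) =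
      s⁻¹ • cmap ((E.trace)⁻¹ • (H * onesCol (a + 1) * (onesCol (a + 1))ᵀ * F) -
          (al * be / Eh.trace) • (Hh * onesCol (b + 1) * (onesCol (b + 1))ᵀ * Fh)) +
        cmap (fromCols (H * E⁻¹ * Sn a) ((-al) • (Hh * Eh⁻¹ * Sn b))) *
          (s • (1 : Matrix (Fin a ⊕ Fin b) (Fin a ⊕ Fin b) ℂ) -
            cmap (fromBlocks (-(SnL a E * L * E⁻¹ * Sn a)) 0 0
              (-(SnL b Eh * Lh * Eh⁻¹ * Sn b))))⁻¹ *
          cmap (fromRows (SnL a E * F) (be • (SnL b Eh * Fh))) := by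
  -- blockify the two big matrices
  rw [blockify s (-(E⁻¹ * L)) (-(Eh⁻¹ * Lh)),
    blockify s (-(SnL a E * L * E⁻¹ * Sn a)) (-(SnL b Eh * Lh * Eh⁻¹ * Sn b))]
  rw [blockify s (-(SnL a E * L * E⁻¹ * Sn a)) (-(SnL b Eh * Lh * Eh⁻¹ * Sn b))] at hinv
  obtain ⟨hX1, hX2⟩ := Matrix.isUnit_fromBlocks_zero₂₁.mp hinv
  obtain ⟨hNM1, hMN1⟩ := block_key a E L hEdiag hEpd hL1 h1L s hs hX1
  obtain ⟨hNM2, hMN2⟩ := block_key b Eh Lh hEhdiag hEhpd hLh1 h1Lh s hs hX2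
  set X1 := s • (1 : Matrix (Fin a) (Fin a) ℂ) - cmap (-(SnL a E * L * E⁻¹ * Sn a)) with hX1d
  set X2 := s • (1 : Matrix (Fin b) (Fin b) ℂ) - cmap (-(SnL b Eh * Lh * Eh⁻¹ * Sn b)) with hX2d
  set N1 := s • (1 : Matrix (Fin (a+1)) (Fin (a+1)) ℂ) - cmap (-(E⁻¹ * L)) with hN1d
  set N2 := s • (1 : Matrix (Fin (b+1)) (Fin (b+1)) ℂ) - cmap (-(Eh⁻¹ * Lh)) with hN2d
  set M1 := (s * (E.trace : ℂ))⁻¹ • cmap (onesCol (a+1) * (onesCol (a+1))ᵀ * E) +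
    cmap (E⁻¹ * Sn a) * X1⁻¹ * cmap (SnL a E * E) with hM1d
  set M2 := (s * (Eh.trace : ℂ))⁻¹ • cmap (onesCol (b+1) * (onesCol (b+1))ᵀ * Eh) +
    cmap (Eh⁻¹ * Sn b) * X2⁻¹ * cmap (SnL b Eh * Eh) with hM2d
  have hNMbig : fromBlocks N1 0 0 N2 * fromBlocks M1 0 0 M2 = 1 := by
    rw [Matrix.fromBlocks_multiply]
    simp only [Matrix.mul_zero, Matrix.zero_mul, add_zero, zero_add, hNM1, hNM2,
      Matrix.fromBlocks_one]
  have hN1u : IsUnit N1 := ⟨⟨N1, M1, hNM1, hMN1⟩, rfl⟩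
  have hN2u : IsUnit N2 := ⟨⟨N2, M2, hNM2, hMN2⟩, rfl⟩
  constructor
  · exact Matrix.isUnit_fromBlocks_zero₂₁.mpr ⟨hN1u, hN2u⟩
  -- substitute the inverses
  rw [Matrix.inv_eq_right_inv hNMbig,
    Matrix.inv_fromBlocks_zero₂₁_of_isUnit_iff X1 0 X2 (iff_of_true hX1 hX2),
    Matrix.mul_zero, Matrix.zero_mul, neg_zero]
  rw [cmap_fromColumns, cmap_fromRows, cmap_fromColumns, cmap_fromRows,
    Matrix.fromCols_mul_fromBlocks, Matrix.fromCols_mul_fromBlocks]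
  simp only [Matrix.mul_zero, Matrix.zero_mul, add_zero, zero_add]
  rw [Matrix.fromCols_mul_fromRows, Matrix.fromCols_mul_fromRows]
  have hEEi : E * E⁻¹ = 1 :=
    Matrix.mul_nonsing_inv E ((Matrix.isUnit_iff_isUnit_det E).mp hEpd.isUnit)
  have hEhEhi : Eh * Eh⁻¹ = 1 :=
    Matrix.mul_nonsing_inv Eh ((Matrix.isUnit_iff_isUnit_det Eh).mp hEhpd.isUnit)
  have hEr : ∀ {γ : Type} (X : Matrix γ (Fin (a+1)) ℝ), X * E * E⁻¹ = X := by
    intro γ X; rw [Matrix.mul_assoc, hEEi, Matrix.mul_one]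
  have hEhr : ∀ {γ : Type} (X : Matrix γ (Fin (b+1)) ℝ), X * Eh * Eh⁻¹ = X := by
    intro γ X; rw [Matrix.mul_assoc, hEhEhi, Matrix.mul_one]
  have hmerge1 : ∀ (Y : Matrix (Fin q) (Fin a) ℂ),
      Y * cmap (SnL a E * E) * cmap (E⁻¹ * F) = Y * cmap (SnL a E * F) := by
    intro Y
    rw [Matrix.mul_assoc, ← cmap_mul, ← Matrix.mul_assoc, hEr]
  have hmerge2 : ∀ (Y : Matrix (Fin q) (Fin b) ℂ),
      Y * cmap (SnL b Eh * Eh) * cmap (Eh⁻¹ * Fh) = Y * cmap (SnL b Eh * Fh) := by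
    intro Y
    rw [Matrix.mul_assoc, ← cmap_mul, ← Matrix.mul_assoc, hEhr]
  simp only [hM1d, hM2d, cmap_smul, cmap_sub, Matrix.mul_add, Matrix.add_mul,
    Matrix.mul_smul, Matrix.smul_mul, smul_sub, smul_smul, ← Matrix.mul_assoc, ← cmap_mul,
    hEr, hEhr, hmerge1, hmerge2]
  match_scalars <;> push_cast <;> ring
end

section
/- (Theorem 1, LMI form.) Let m, p, q ≥ 1, let Ān, Ār, J ∈ ℝ^{m×m}, B̄n, B̄r ∈ ℝ^{m×p}, C̄n, C̄r ∈ ℝ^{q×m}, define Ā := Ān + JĀr, B̄ := B̄n + JB̄r, C̄ := C̄n + C̄r, and let γ > 0. Then the following are equivalent: (i) there exists a symmetric positive definite X ∈ ℝ^{m×m} such that [[ĀᵀX + XĀ, XB̄, C̄ᵀ], [B̄ᵀX, −γI_p, 0], [C̄, 0, −γI_q]] ≺ 0; (ii) there exist θ̂ > 0 and a symmetric positive definite X̂ ∈ ℝ^{m×m} such that ψ∞(X̂, θ̂γ, θ̂) + φ∞(θ̂) ≺ 0, where γ̂ := θ̂γ, ψ∞(X̂, γ̂, θ̂) := [[ĀnᵀX̂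 + X̂Ān, X̂B̄n, θ̂C̄nᵀ, X̂J], [B̄nᵀX̂, −γ̂I_p, 0, 0], [θ̂C̄n, 0, −γ̂I_q, 0], [JᵀX̂, 0, 0, 0]] and φ∞(θ̂) := [[−ĀrᵀĀr, −ĀrᵀB̄r, θ̂C̄rᵀ, Ārᵀ], [−B̄rᵀĀr, −B̄rᵀB̄r, 0, B̄rᵀ], [θ̂C̄r, 0, 0, 0], [Ār, B̄r, 0, −I_m]]. Moreover, in (ii) the inequality holds for all sufficiently small θ̂ > 0 once it holds for one. -/
open Matrix

variable {m p q : ℕ}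

/-- The matrix-valued mapping `ψ∞(X̂, γ̂)` of Theorem 1 in the paper. -/
def psiInf (An : Matrix (Fin m) (Fin m) ℝ) (Bn : Matrix (Fin m) (Fin p) ℝ)
    (Cn : Matrix (Fin q) (Fin m) ℝ) (J X : Matrix (Fin m) (Fin m) ℝ) (th ga : ℝ) :
    Matrix ((Fin m ⊕ Fin p) ⊕ (Fin q ⊕ Fin m)) ((Fin m ⊕ Fin p) ⊕ (Fin q ⊕ Fin m)) ℝ :=
  fromBlocks
    (fromBlocks (Anᵀ * X + X * An) (X * Bn) (Bnᵀ * X) ((-ga) • 1))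
    (fromBlocks (th • Cnᵀ) (X * J) 0 0)
    (fromBlocks (th • Cn) 0 (Jᵀ * X) 0)
    (fromBlocks ((-ga) • 1) 0 0 0)

/-- The matrix-valued mapping `φ∞` of Theorem 1 in the paper. -/
def phiInf (Ar : Matrix (Fin m) (Fin m) ℝ) (Br : Matrix (Fin m) (Fin p) ℝ)
    (Cr : Matrix (Fin q) (Fin m) ℝ) (th : ℝ) :
    Matrix ((Fin m ⊕ Fin p) ⊕ (Fin q ⊕ Fin m)) ((Fin m ⊕ Fin p) ⊕ (Fin q ⊕ Fin m)) ℝ :=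
  fromBlocks
    (fromBlocks (-(Arᵀ * Ar)) (-(Arᵀ * Br)) (-(Brᵀ * Ar)) (-(Brᵀ * Br)))
    (fromBlocks (th • Crᵀ) Arᵀ 0 Brᵀ)
    (fromBlocks (th • Cr) 0 Ar Br)
    (fromBlocks 0 0 0 (-1))

/-- The Bounded Real Lemma block matrix (inequality (8) in the paper). -/
def brl (A : Matrix (Fin m) (Fin m) ℝ) (B : Matrix (Fin m) (Fin p) ℝ)
    (C : Matrix (Fin q) (Fin m) ℝ) (X : Matrix (Fin m) (Fin m) ℝ) (ga : ℝ) :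
    Matrix (Fin m ⊕ (Fin p ⊕ Fin q)) (Fin m ⊕ (Fin p ⊕ Fin q)) ℝ :=
  fromBlocks (Aᵀ * X + X * A) (fromCols (X * B) Cᵀ) (fromRows (Bᵀ * X) C)
    (fromBlocks ((-ga) • 1) 0 0 ((-ga) • 1))

/-! ### Auxiliary lemmas -/

theorem HinfAux.dp_transpose {α β : Type*} [Fintype α] [Fintype β] (M : Matrix α β ℝ)
    (a : β → ℝ) (b : α → ℝ) : a ⬝ᵥ (Mᵀ *ᵥ b) = b ⬝ᵥ (M *ᵥ a) := by
  rw [dotProduct_mulVec, vecMul_transpose, dotProduct_comm]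

theorem HinfAux.dp_self_nonneg {α : Type*} [Fintype α] (v : α → ℝ) : 0 ≤ v ⬝ᵥ v :=
  Finset.sum_nonneg fun _ _ => mul_self_nonneg _

theorem HinfAux.dp_self_pos {α : Type*} [Fintype α] {v : α → ℝ} (hv : v ≠ 0) : 0 < v ⬝ᵥ v := by
  simpa using Matrix.dotProduct_star_self_pos_iff.mpr hv

/-- The fundamental completion-of-squares identity. -/
theorem HinfAux.key (An Ar J X : Matrix (Fin m) (Fin m) ℝ) (Bn Br : Matrix (Fin m) (Fin p) ℝ)
    (Cn Cr : Matrix (Fin q) (Fin m) ℝ) (ga th : ℝ) (hX : Xᵀ = X)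
    (u : Fin m → ℝ) (v : Fin p → ℝ) (w : Fin q → ℝ) (z : Fin m → ℝ) :
    (Sum.elim (Sum.elim u v) (Sum.elim w z)) ⬝ᵥ
      ((psiInf An Bn Cn J (th • X) th (th * ga) + phiInf Ar Br Cr th) *ᵥ
        Sum.elim (Sum.elim u v) (Sum.elim w z))
    = th * ((Sum.elim u (Sum.elim v w)) ⬝ᵥ
        (brl (An + J * Ar) (Bn + J * Br) (Cn + Cr) X ga *ᵥ Sum.elim u (Sum.elim v w)))
      + th ^ 2 * ((Jᵀ *ᵥ (X *ᵥ u)) ⬝ᵥ (Jᵀ *ᵥ (X *ᵥ u)))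
      - (z - (th • (Jᵀ *ᵥ (X *ᵥ u)) + Ar *ᵥ u + Br *ᵥ v)) ⬝ᵥ
        (z - (th • (Jᵀ *ᵥ (X *ᵥ u)) + Ar *ᵥ u + Br *ᵥ v)) := by
  have hXd : ∀ a b : Fin m → ℝ, a ⬝ᵥ (X *ᵥ b) = b ⬝ᵥ (X *ᵥ a) := fun a b => by
    conv_lhs => rw [← hX, HinfAux.dp_transpose]
  simp only [psiInf, phiInf, brl, Matrix.add_mulVec, Matrix.fromBlocks_mulVec,
    Matrix.fromCols_mulVec_sumElim, Matrix.fromRows_mulVec, sumElim_dotProduct_sumElim,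
    Sum.elim_comp_inl, Sum.elim_comp_inr, Matrix.add_mul, Matrix.mul_add, Matrix.transpose_add,
    Matrix.transpose_mul, Matrix.transpose_transpose, ← Matrix.mulVec_mulVec,
    Matrix.smul_mulVec, Matrix.mulVec_smul, Matrix.zero_mulVec, Matrix.neg_mulVec,
    Matrix.one_mulVec, dotProduct_add, add_dotProduct, dotProduct_sub,
    sub_dotProduct, dotProduct_smul, smul_dotProduct,
    dotProduct_neg, neg_dotProduct, dotProduct_zero, zero_dotProduct,
    Pi.add_apply, smul_eq_mul, HinfAux.dp_transpose, Matrix.neg_mul]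
  simp only [hXd, dotProduct_comm]
  simp only [HinfAux.dp_transpose]
  simp only [hXd, dotProduct_comm]
  ring

theorem HinfAux.herm_brl (A : Matrix (Fin m) (Fin m) ℝ) (B : Matrix (Fin m) (Fin p) ℝ)
    (C : Matrix (Fin q) (Fin m) ℝ) (X : Matrix (Fin m) (Fin m) ℝ) (ga : ℝ) (hX : Xᵀ = X) :
    (brl A B C X ga).IsHermitian := by
  rw [Matrix.IsHermitian, conjTranspose_eq_transpose_of_trivial]
  simp [brl, fromBlocks_transpose, transpose_fromCols, transpose_fromRows, transpose_add,
    transpose_mul, transpose_smul, hX, add_comm]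

theorem HinfAux.herm_big (An Ar J Y : Matrix (Fin m) (Fin m) ℝ) (Bn Br : Matrix (Fin m) (Fin p) ℝ)
    (Cn Cr : Matrix (Fin q) (Fin m) ℝ) (th ga' : ℝ) (hY : Yᵀ = Y) :
    (psiInf An Bn Cn J Y th ga' + phiInf Ar Br Cr th).IsHermitian := by
  rw [Matrix.IsHermitian, conjTranspose_eq_transpose_of_trivial]
  simp [psiInf, phiInf, fromBlocks_transpose, transpose_add, transpose_mul, transpose_smul,
    transpose_neg, hY, add_comm]

theorem HinfAux.negPosDef_iff {n : Type*} [Fintype n] {M : Matrix n n ℝ} (hM : M.IsHermitian) :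
    (-M).PosDef ↔ ∀ x, x ≠ 0 → x ⬝ᵥ (M *ᵥ x) < 0 := by
  constructor
  · intro h x hx
    have := h.dotProduct_mulVec_pos hx
    simp only [neg_mulVec, dotProduct_neg, star_trivial] at this
    linarith
  · intro h
    refine PosDef.of_dotProduct_mulVec_pos hM.neg fun x hx => ?_
    simp only [neg_mulVec, dotProduct_neg, star_trivial]
    linarith [h x hx]

theorem HinfAux.posDef_smul {n : Type*} [Fintype n] {M : Matrix n n ℝ} (hM : M.PosDef)
    {c : ℝ} (hc : 0 < c) : (c • M).PosDef := by
  have hMt : Mᵀ = M := by rw [← conjTranspose_eq_transpose_of_trivial]; exact hM.1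
  refine PosDef.of_dotProduct_mulVec_pos ?_ fun x hx => ?_
  · rw [Matrix.IsHermitian, conjTranspose_eq_transpose_of_trivial, transpose_smul, hMt]
  · rw [smul_mulVec, dotProduct_smul, smul_eq_mul]
    exact mul_pos hc (hM.dotProduct_mulVec_pos hx)

theorem HinfAux.posDef_transpose_eq {n : Type*} [Fintype n] {M : Matrix n n ℝ}
    (hM : M.PosDef) : Mᵀ = M := by
  rw [← conjTranspose_eq_transpose_of_trivial]; exact hM.1

theorem HinfAux.elim3_eq {α β γ : Type*} (y : α ⊕ (β ⊕ γ) → ℝ) :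
    Sum.elim (y ∘ Sum.inl) (Sum.elim (y ∘ Sum.inr ∘ Sum.inl) (y ∘ Sum.inr ∘ Sum.inr)) = y := by
  funext i; rcases i with i | i; · rfl
  rcases i with i | i <;> rfl

theorem HinfAux.elim4_eq {α β γ δ : Type*} (x : (α ⊕ β) ⊕ (γ ⊕ δ) → ℝ) :
    Sum.elim (Sum.elim (x ∘ Sum.inl ∘ Sum.inl) (x ∘ Sum.inl ∘ Sum.inr))
      (Sum.elim (x ∘ Sum.inr ∘ Sum.inl) (x ∘ Sum.inr ∘ Sum.inr)) = x := by
  funext i; rcases i with i | i <;> rcases i with i | i <;> rfl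

theorem HinfAux.exists_theta {ι : Type*} [Fintype ι] [Nonempty ι]
    (f g : (ι → ℝ) → ℝ) (hf : Continuous f) (hg : Continuous g)
    (hfq : ∀ (c : ℝ) x, f (c • x) = c ^ 2 * f x) (hgq : ∀ (c : ℝ) x, g (c • x) = c ^ 2 * g x)
    (hfpos : ∀ x, x ≠ 0 → 0 < f x) (hg0 : ∀ x, 0 ≤ g x) :
    ∃ th : ℝ, 0 < th ∧ ∀ x, x ≠ 0 → th * g x < f x := by
  have hne : (Metric.sphere (0 : ι → ℝ) 1).Nonempty := NormedSpace.sphere_nonempty.mpr zero_le_one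
  obtain ⟨x₀, hx₀S, hx₀min⟩ :=
    (isCompact_sphere (0 : ι → ℝ) 1).exists_isMinOn hne hf.continuousOn
  obtain ⟨x₁, _, hx₁max⟩ :=
    (isCompact_sphere (0 : ι → ℝ) 1).exists_isMaxOn hne hg.continuousOn
  have hx₀ne : x₀ ≠ 0 := by
    intro h
    rw [mem_sphere_zero_iff_norm, h, norm_zero] at hx₀S
    norm_num at hx₀S
  have hε : 0 < f x₀ := hfpos _ hx₀ne
  have hK : 0 ≤ g x₁ := hg0 _
  refine ⟨f x₀ / (g x₁ + 1), div_pos hε (by linarith), fun x hx => ?_⟩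
  have hn : (0 : ℝ) < ‖x‖ := norm_pos_iff.mpr hx
  have hxS : ‖x‖⁻¹ • x ∈ Metric.sphere (0 : ι → ℝ) 1 := by
    rw [mem_sphere_zero_iff_norm, norm_smul, norm_inv, norm_norm, inv_mul_cancel₀ hn.ne']
  have hfx : f x = ‖x‖ ^ 2 * f (‖x‖⁻¹ • x) := by
    conv_lhs => rw [show x = ‖x‖ • (‖x‖⁻¹ • x) by
      rw [smul_smul, mul_inv_cancel₀ hn.ne', one_smul]]
    rw [hfq]
  have hgx : g x = ‖x‖ ^ 2 * g (‖x‖⁻¹ • x) := by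
    conv_lhs => rw [show x = ‖x‖ • (‖x‖⁻¹ • x) by
      rw [smul_smul, mul_inv_cancel₀ hn.ne', one_smul]]
    rw [hgq]
  have h1 : f x₀ ≤ f (‖x‖⁻¹ • x) := hx₀min hxS
  have h2 : g (‖x‖⁻¹ • x) ≤ g x₁ := hx₁max hxS
  have h3 : 0 ≤ g (‖x‖⁻¹ • x) := hg0 _
  rw [hfx, hgx]
  have hsq : 0 < ‖x‖ ^ 2 := by positivity
  have hkey : f x₀ / (g x₁ + 1) * g (‖x‖⁻¹ • x) < f x₀ := by
    rw [div_mul_eq_mul_div, div_lt_iff₀ (by linarith)]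
    nlinarith
  nlinarith

/-- Scalar characterization of positive definiteness of `-(ψ∞ + φ∞)`. -/
theorem HinfAux.big_iff (An Ar J X : Matrix (Fin m) (Fin m) ℝ) (Bn Br : Matrix (Fin m) (Fin p) ℝ)
    (Cn Cr : Matrix (Fin q) (Fin m) ℝ) (ga th : ℝ) (hth : 0 < th) (hX : Xᵀ = X) :
    (-(psiInf An Bn Cn J (th • X) th (th * ga) + phiInf Ar Br Cr th)).PosDef ↔
      ∀ y : Fin m ⊕ (Fin p ⊕ Fin q) → ℝ, y ≠ 0 →
        y ⬝ᵥ (brl (An + J * Ar) (Bn + J * Br) (Cn + Cr) X ga *ᵥ y)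
          + th * ((Jᵀ *ᵥ (X *ᵥ (y ∘ Sum.inl))) ⬝ᵥ (Jᵀ *ᵥ (X *ᵥ (y ∘ Sum.inl)))) < 0 := by
  have hXth : (th • X)ᵀ = th • X := by rw [transpose_smul, hX]
  rw [HinfAux.negPosDef_iff (HinfAux.herm_big An Ar J (th • X) Bn Br Cn Cr th (th * ga) hXth)]
  constructor
  · intro h y hy
    set u := y ∘ Sum.inl with hu
    set v := y ∘ Sum.inr ∘ Sum.inl with hv
    set w := y ∘ Sum.inr ∘ Sum.inr with hw
    set s := th • (Jᵀ *ᵥ (X *ᵥ u)) + Ar *ᵥ u + Br *ᵥ v with hs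
    have hxne : Sum.elim (Sum.elim u v) (Sum.elim w s) ≠ 0 := by
      intro h0
      apply hy
      rw [← HinfAux.elim3_eq y]
      have h1 : u = 0 := funext fun i => congrFun h0 (Sum.inl (Sum.inl i))
      have h2 : v = 0 := funext fun i => congrFun h0 (Sum.inl (Sum.inr i))
      have h3 : w = 0 := funext fun i => congrFun h0 (Sum.inr (Sum.inl i))
      rw [← hu, ← hv, ← hw, h1, h2, h3]
      funext i; rcases i with i | i; · rfl
      rcases i with i | i <;> rfl
    have hlt := h _ hxne
    rw [HinfAux.key An Ar J X Bn Br Cn Cr ga th hX u v w s] at hlt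
    rw [sub_self, zero_dotProduct, sub_zero] at hlt
    have hy' : Sum.elim u (Sum.elim v w) = y := HinfAux.elim3_eq y
    rw [hy'] at hlt
    nlinarith [hlt, hth]
  · intro h x hx
    rw [← HinfAux.elim4_eq x]
    set u := x ∘ Sum.inl ∘ Sum.inl with hu
    set v := x ∘ Sum.inl ∘ Sum.inr with hv
    set w := x ∘ Sum.inr ∘ Sum.inl with hw
    set z := x ∘ Sum.inr ∘ Sum.inr with hz
    rw [HinfAux.key An Ar J X Bn Br Cn Cr ga th hX u v w z]
    by_cases hy : Sum.elim u (Sum.elim v w) = (0 : Fin m ⊕ (Fin p ⊕ Fin q) → ℝ)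
    · have h1 : u = 0 := funext fun i => congrFun hy (Sum.inl i)
      have h2 : v = 0 := funext fun i => congrFun hy (Sum.inr (Sum.inl i))
      have h3 : w = 0 := funext fun i => congrFun hy (Sum.inr (Sum.inr i))
      have hzne : z ≠ 0 := by
        intro h4
        apply hx
        rw [← HinfAux.elim4_eq x, ← hu, ← hv, ← hw, ← hz, h1, h2, h3, h4]
        funext i; rcases i with i | i <;> rcases i with i | i <;> rfl
      rw [hy, h1, h2]
      simp only [Matrix.mulVec_zero, dotProduct_zero, smul_zero, zero_add,
        zero_dotProduct, add_zero, sub_zero, mul_zero]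
      have := HinfAux.dp_self_pos hzne
      nlinarith [this]
    · have hlt := h _ hy
      have hcomp : (Sum.elim u (Sum.elim v w)) ∘ Sum.inl = u := Sum.elim_comp_inl _ _
      rw [hcomp] at hlt
      have hzs := HinfAux.dp_self_nonneg
        (z - (th • (Jᵀ *ᵥ (X *ᵥ u)) + Ar *ᵥ u + Br *ᵥ v))
      nlinarith [hlt, hth, hzs]

/-- Theorem 1, LMI form: with `Ā = Ān + JĀr`, `B̄ = B̄n + JB̄r`, `C̄ = C̄n + C̄r`, the Bounded
Real Lemma inequality has a positive definite solution `X` iff there exist `θ̂ > 0` and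
positive definite `X̂` with `ψ∞(X̂, θ̂γ, θ̂) + φ∞(θ̂) ≺ 0`; moreover the latter holds for all
smaller positive `θ̂` once it holds for one. -/
theorem hinf_lmi_decoupling (m p q : ℕ) (hm : 1 ≤ m) (hp : 1 ≤ p) (hq : 1 ≤ q)
    (An Ar J : Matrix (Fin m) (Fin m) ℝ) (Bn Br : Matrix (Fin m) (Fin p) ℝ)
    (Cn Cr : Matrix (Fin q) (Fin m) ℝ) (ga : ℝ) (hga : 0 < ga) :
    ((∃ X : Matrix (Fin m) (Fin m) ℝ, X.PosDef ∧
        (-(brl (An + J * Ar) (Bn + J * Br) (Cn + Cr) X ga)).PosDef) ↔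
      (∃ th : ℝ, 0 < th ∧ ∃ X : Matrix (Fin m) (Fin m) ℝ, X.PosDef ∧
        (-(psiInf An Bn Cn J X th (th * ga) + phiInf Ar Br Cr th)).PosDef)) ∧
    (∀ th₀ : ℝ, 0 < th₀ →
      (∃ X : Matrix (Fin m) (Fin m) ℝ, X.PosDef ∧
        (-(psiInf An Bn Cn J X th₀ (th₀ * ga) + phiInf Ar Br Cr th₀)).PosDef) →
      ∀ th : ℝ, 0 < th → th ≤ th₀ →
        ∃ X : Matrix (Fin m) (Fin m) ℝ, X.PosDef ∧
          (-(psiInf An Bn Cn J X th (th * ga) + phiInf Ar Br Cr th)).PosDef) := by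
  haveI : Nonempty (Fin m) := ⟨⟨0, hm⟩⟩
  constructor
  · constructor
    · rintro ⟨X, hXpd, hbrl⟩
      have hXt : Xᵀ = X := HinfAux.posDef_transpose_eq hXpd
      have hherm := HinfAux.herm_brl (An + J * Ar) (Bn + J * Br) (Cn + Cr) X ga hXt
      have hscal := (HinfAux.negPosDef_iff hherm).mp hbrl
      set f : (Fin m ⊕ (Fin p ⊕ Fin q) → ℝ) → ℝ := fun y =>
        -(y ⬝ᵥ (brl (An + J * Ar) (Bn + J * Br) (Cn + Cr) X ga *ᵥ y)) with hf
      set g : (Fin m ⊕ (Fin p ⊕ Fin q) → ℝ) → ℝ := fun y =>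
        (Jᵀ *ᵥ (X *ᵥ (y ∘ Sum.inl))) ⬝ᵥ (Jᵀ *ᵥ (X *ᵥ (y ∘ Sum.inl))) with hg
      have hcomp : Continuous fun y : Fin m ⊕ (Fin p ⊕ Fin q) → ℝ => y ∘ Sum.inl :=
        continuous_pi fun i => continuous_apply _
      have hd : Continuous fun y : Fin m ⊕ (Fin p ⊕ Fin q) → ℝ =>
          Jᵀ *ᵥ (X *ᵥ (y ∘ Sum.inl)) :=
        continuous_const.matrix_mulVec (continuous_const.matrix_mulVec hcomp)
      have hfc : Continuous f :=
        (continuous_id.dotProduct (continuous_const.matrix_mulVec continuous_id)).neg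
      have hgc : Continuous g := hd.dotProduct hd
      have hsc : ∀ (c : ℝ) (y : Fin m ⊕ (Fin p ⊕ Fin q) → ℝ),
          (c • y) ∘ Sum.inl = c • (y ∘ Sum.inl) := fun _ _ => rfl
      have hfq : ∀ (c : ℝ) y, f (c • y) = c ^ 2 * f y := fun c y => by
        simp only [hf, mulVec_smul, dotProduct_smul, smul_dotProduct, smul_eq_mul]
        ring
      have hgq : ∀ (c : ℝ) y, g (c • y) = c ^ 2 * g y := fun c y => by
        simp only [hg, hsc, mulVec_smul, dotProduct_smul, smul_dotProduct, smul_eq_mul]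
        ring
      have hfpos : ∀ y, y ≠ 0 → 0 < f y := fun y hy => by
        simp only [hf]; linarith [hscal y hy]
      have hg0 : ∀ y, 0 ≤ g y := fun y => HinfAux.dp_self_nonneg _
      obtain ⟨th, hth, hlt⟩ := HinfAux.exists_theta f g hfc hgc hfq hgq hfpos hg0
      refine ⟨th, hth, th • X, HinfAux.posDef_smul hXpd hth,
        (HinfAux.big_iff An Ar J X Bn Br Cn Cr ga th hth hXt).mpr fun y hy => ?_⟩
      have := hlt y hy
      simp only [hf, hg] at this
      linarith
    · rintro ⟨th, hth, Y, hYpd, hbig⟩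
      set X := th⁻¹ • Y with hXdef
      have hXpd : X.PosDef := HinfAux.posDef_smul hYpd (inv_pos.mpr hth)
      have hXt : Xᵀ = X := HinfAux.posDef_transpose_eq hXpd
      have hYX : th • X = Y := by
        rw [hXdef, smul_smul, mul_inv_cancel₀ hth.ne', one_smul]
      rw [← hYX] at hbig
      have hscal := (HinfAux.big_iff An Ar J X Bn Br Cn Cr ga th hth hXt).mp hbig
      refine ⟨X, hXpd,
        (HinfAux.negPosDef_iff (HinfAux.herm_brl _ _ _ X ga hXt)).mpr fun y hy => ?_⟩
      have h1 := hscal y hy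
      have h2 : 0 ≤ (Jᵀ *ᵥ (X *ᵥ (y ∘ Sum.inl))) ⬝ᵥ (Jᵀ *ᵥ (X *ᵥ (y ∘ Sum.inl))) :=
        HinfAux.dp_self_nonneg _
      nlinarith [h1, h2, hth]
  · rintro th₀ hth₀ ⟨Y, hYpd, hbig⟩ th hth hle
    set X := th₀⁻¹ • Y with hXdef
    have hXpd : X.PosDef := HinfAux.posDef_smul hYpd (inv_pos.mpr hth₀)
    have hXt : Xᵀ = X := HinfAux.posDef_transpose_eq hXpd
    have hYX : th₀ • X = Y := by
      rw [hXdef, smul_smul, mul_inv_cancel₀ hth₀.ne', one_smul]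
    rw [← hYX] at hbig
    have hscal := (HinfAux.big_iff An Ar J X Bn Br Cn Cr ga th₀ hth₀ hXt).mp hbig
    refine ⟨th • X, HinfAux.posDef_smul hXpd hth,
      (HinfAux.big_iff An Ar J X Bn Br Cn Cr ga th hth hXt).mpr fun y hy => ?_⟩
    have h1 := hscal y hy
    have h2 : 0 ≤ (Jᵀ *ᵥ (X *ᵥ (y ∘ Sum.inl))) ⬝ᵥ (Jᵀ *ᵥ (X *ᵥ (y ∘ Sum.inl))) :=
      HinfAux.dp_self_nonneg _
    nlinarith [h1, h2, hth, hle]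
end

section
/- (Theorem 3, LMI form.) Let m, p, q ≥ 1, let Ān, Ār, J ∈ ℝ^{m×m}, B̄n, B̄r ∈ ℝ^{m×p}, C̄ ∈ ℝ^{q×m}, define Ā := Ān + JĀr, B̄ := B̄n + JB̄r, and let γ > 0. Then the following are equivalent: (i) there exist a symmetric positive definite X ∈ ℝ^{m×m} and a symmetric R ∈ ℝ^{q×q} such that [[ĀᵀX + XĀ, XB̄], [B̄ᵀX, −I_p]] ≺ 0, [[X, C̄ᵀ], [C̄, R]] ≻ 0, and trace(R) < γ; (ii) there exist θ̂ > 0, a symmetric positive definite X̂ ∈ ℝ^{m×m}, and a symmetric R̂ ∈ ℝ^{q×q} such that ψ₂(X̂, θ̂) + φ₂ ≺ 0, [[X̂, θ̂C̄ᵀ], [θ̂C̄, R̂]] ≻ 0, and trace(R̂) < θ̂γ, where ψ₂(X̂, θ̂) := [[ĀnᵀX̂ + X̂Ān, X̂B̄n, X̂J], [B̄nᵀX̂, −θ̂I_p, 0], [JᵀX̂, 0, 0]] and φ₂ := [[−ĀrᵀĀr, −ĀrᵀB̄r, Ārᵀ], [−B̄rᵀĀr, −B̄rᵀB̄r, B̄rᵀ],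 [Ār, B̄r, −I_m]]. -/
open Matrix

set_option linter.unusedSectionVars false
set_option linter.unusedVariables false
set_option maxHeartbeats 1000000

variable {m p q : ℕ}

/-- The matrix-valued mapping `ψ₂(X̂)` of Theorem 3 in the paper. -/
def psiTwo (An : Matrix (Fin m) (Fin m) ℝ) (Bn : Matrix (Fin m) (Fin p) ℝ)
    (J X : Matrix (Fin m) (Fin m) ℝ) (th : ℝ) :
    Matrix (Fin m ⊕ (Fin p ⊕ Fin m)) (Fin m ⊕ (Fin p ⊕ Fin m)) ℝ :=
  fromBlocks (Anᵀ * X + X * An) (fromCols (X * Bn) (X * J))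
    (fromRows (Bnᵀ * X) (Jᵀ * X)) (fromBlocks ((-th) • 1) 0 0 0)

/-- The matrix-valued mapping `φ₂` of Theorem 3 in the paper. -/
def phiTwo (Ar : Matrix (Fin m) (Fin m) ℝ) (Br : Matrix (Fin m) (Fin p) ℝ) :
    Matrix (Fin m ⊕ (Fin p ⊕ Fin m)) (Fin m ⊕ (Fin p ⊕ Fin m)) ℝ :=
  fromBlocks (-(Arᵀ * Ar)) (fromCols (-(Arᵀ * Br)) Arᵀ)
    (fromRows (-(Brᵀ * Ar)) Ar) (fromBlocks (-(Brᵀ * Br)) Brᵀ Br (-1))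

section H2Aux

variable {n k : Type*} [Fintype n] [Fintype k] [DecidableEq n]

lemma dtm (A : Matrix k n ℝ) (x : n → ℝ) (y : k → ℝ) :
    x ⬝ᵥ (Aᵀ *ᵥ y) = (A *ᵥ x) ⬝ᵥ y := by
  rw [dotProduct_mulVec, vecMul_transpose]

lemma dtm' (A : Matrix k n ℝ) (x : n → ℝ) (y : k → ℝ) :
    (Aᵀ *ᵥ y) ⬝ᵥ x = y ⬝ᵥ (A *ᵥ x) := by
  rw [dotProduct_comm, dtm, dotProduct_comm]

lemma dot_self_nonneg (x : n → ℝ) : 0 ≤ x ⬝ᵥ x :=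
  Finset.sum_nonneg fun i _ => mul_self_nonneg _

lemma dot_self_pos {x : n → ℝ} (hx : x ≠ 0) : 0 < x ⬝ᵥ x :=
  lt_of_le_of_ne (dot_self_nonneg x) (fun h => hx (dotProduct_self_eq_zero.mp h.symm))

lemma real_star_vec (x : n → ℝ) : star x = x := by
  ext i; simp

lemma qf_pos_of_posdef {M : Matrix n n ℝ} (hM : M.PosDef) {x : n → ℝ} (hx : x ≠ 0) :
    0 < x ⬝ᵥ (M *ᵥ x) := by
  have := hM.dotProduct_mulVec_pos hx
  rwa [real_star_vec] at this

lemma posdef_of_qf {M : Matrix n n ℝ} (hsym : Mᵀ = M)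
    (h : ∀ x : n → ℝ, x ≠ 0 → 0 < x ⬝ᵥ (M *ᵥ x)) : M.PosDef := by
  refine Matrix.PosDef.of_dotProduct_mulVec_pos ?_ fun x hx => by rw [real_star_vec]; exact h x hx
  rw [Matrix.IsHermitian, conjTranspose_eq_transpose_of_trivial, hsym]

lemma posdef_transpose_eq {M : Matrix n n ℝ} (hM : M.PosDef) : Mᵀ = M := by
  have := hM.1; rwa [Matrix.IsHermitian, conjTranspose_eq_transpose_of_trivial] at this

lemma posdef_smul {M : Matrix n n ℝ} (hM : M.PosDef) {c : ℝ} (hc : 0 < c) :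
    (c • M).PosDef := by
  refine posdef_of_qf ?_ fun x hx => ?_
  · rw [transpose_smul, posdef_transpose_eq hM]
  · rw [smul_mulVec, dotProduct_smul, smul_eq_mul]
    exact mul_pos hc (qf_pos_of_posdef hM hx)

lemma upper_bound (A : Matrix k n ℝ) :
    ∃ K > 0, ∀ x : n → ℝ, (A *ᵥ x) ⬝ᵥ (A *ᵥ x) ≤ K * (x ⬝ᵥ x) := by
  refine ⟨(∑ i, ∑ j, (A i j)^2) + 1, by positivity, fun x => ?_⟩
  have h1 : ∀ i, (A *ᵥ x) i * (A *ᵥ x) i ≤ (∑ j, (A i j)^2) * (x ⬝ᵥ x) := by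
    intro i
    have h2 := Finset.sum_mul_sq_le_sq_mul_sq Finset.univ (fun j => A i j) x
    calc (A *ᵥ x) i * (A *ᵥ x) i = (∑ j, A i j * x j)^2 := by
          simp [Matrix.mulVec, dotProduct, sq]
      _ ≤ (∑ j, (A i j)^2) * (∑ j, (x j)^2) := by
          simpa [sq] using h2
      _ = (∑ j, (A i j)^2) * (x ⬝ᵥ x) := by
          simp [dotProduct, sq]
  calc (A *ᵥ x) ⬝ᵥ (A *ᵥ x) = ∑ i, (A *ᵥ x) i * (A *ᵥ x) i := rfl
    _ ≤ ∑ i : k, (∑ j, (A i j)^2) * (x ⬝ᵥ x) := Finset.sum_le_sum fun i _ => h1 i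
    _ = (∑ i, ∑ j, (A i j)^2) * (x ⬝ᵥ x) := by rw [Finset.sum_mul]
    _ ≤ ((∑ i, ∑ j, (A i j)^2) + 1) * (x ⬝ᵥ x) := by
        nlinarith [dot_self_nonneg x]

lemma lower_bound [Nonempty n] {M : Matrix n n ℝ} (hM : M.PosDef) :
    ∃ c > 0, ∀ x : n → ℝ, c * (x ⬝ᵥ x) ≤ x ⬝ᵥ (M *ᵥ x) := by
  have hqf : ∀ x : n → ℝ, x ≠ 0 → 0 < x ⬝ᵥ (M *ᵥ x) := fun x hx => qf_pos_of_posdef hM hx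
  set S : Set (n → ℝ) := {x | x ⬝ᵥ x = 1} with hS
  have hcont : Continuous fun x : n → ℝ => x ⬝ᵥ (M *ᵥ x) := by
    have : (fun x : n → ℝ => x ⬝ᵥ (M *ᵥ x)) = fun x => ∑ i, x i * ∑ j, M i j * x j := by
      funext x; rfl
    rw [this]
    exact continuous_finset_sum _ fun i _ => ((continuous_apply i).mul
      (continuous_finset_sum _ fun j _ => continuous_const.mul (continuous_apply j)))
  have hcont0 : Continuous fun x : n → ℝ => x ⬝ᵥ x :=
    continuous_finset_sum _ fun i _ => (continuous_apply i).mul (continuous_apply i)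
  have hclosed : IsClosed S := isClosed_eq hcont0 continuous_const
  have hbdd : Bornology.IsBounded S := by
    apply Bornology.IsBounded.subset (Metric.isBounded_closedBall (x := (0 : n → ℝ)) (r := 1))
    intro x hx
    simp only [Metric.mem_closedBall, dist_zero_right]
    rw [pi_norm_le_iff_of_nonneg zero_le_one]
    intro i
    have h1 : (x i)^2 ≤ x ⬝ᵥ x := by
      rw [show x ⬝ᵥ x = ∑ j, (x j)^2 from by simp [dotProduct, sq]]
      exact Finset.single_le_sum (fun j _ => sq_nonneg (x j)) (Finset.mem_univ i)
    rw [hx] at h1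
    rw [show ‖x i‖ = |x i| from rfl]
    nlinarith [abs_nonneg (x i), sq_abs (x i)]
  have hcompact : IsCompact S := Metric.isCompact_of_isClosed_isBounded hclosed hbdd
  have hne : S.Nonempty := by
    obtain ⟨i⟩ := ‹Nonempty n›
    refine ⟨Pi.single i 1, ?_⟩
    simp [hS, dotProduct, Pi.single_apply]
  obtain ⟨x₀, hx₀S, hmin⟩ := hcompact.exists_isMinOn hne hcont.continuousOn
  have hx₀ne : x₀ ≠ 0 := by
    intro h; rw [h] at hx₀S; simp [hS, dotProduct] at hx₀S
  refine ⟨x₀ ⬝ᵥ (M *ᵥ x₀), hqf x₀ hx₀ne, fun x => ?_⟩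
  rcases eq_or_ne x 0 with rfl | hx
  · simp
  · set t : ℝ := Real.sqrt (x ⬝ᵥ x) with ht
    have hdpos : 0 < x ⬝ᵥ x := dot_self_pos hx
    have htpos : 0 < t := Real.sqrt_pos.mpr hdpos
    have ht2 : t * t = x ⬝ᵥ x := Real.mul_self_sqrt hdpos.le
    have hyS : (t⁻¹ • x) ∈ S := by
      simp only [hS, Set.mem_setOf_eq, smul_dotProduct, dotProduct_smul, smul_eq_mul]
      field_simp
      nlinarith
    have hmm := hmin hyS
    simp only [Set.mem_setOf_eq, smul_dotProduct, dotProduct_smul, mulVec_smul,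
      smul_eq_mul] at hmm
    have h3 : (x₀ ⬝ᵥ (M *ᵥ x₀)) * (t * t) ≤ x ⬝ᵥ (M *ᵥ x) := by
      have h4 : 0 < t * t := mul_pos htpos htpos
      calc (x₀ ⬝ᵥ (M *ᵥ x₀)) * (t * t)
          ≤ (t⁻¹ * (t⁻¹ * (x ⬝ᵥ (M *ᵥ x)))) * (t * t) := by nlinarith
        _ = x ⬝ᵥ (M *ᵥ x) := by field_simp
    rw [← ht2]; linarith

lemma elim_eq_zero_iff {α β : Type*} {a : α → ℝ} {b : β → ℝ} :
    Sum.elim a b = 0 ↔ a = 0 ∧ b = 0 := by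
  constructor
  · intro h
    exact ⟨funext fun i => congrFun h (Sum.inl i), funext fun i => congrFun h (Sum.inr i)⟩
  · rintro ⟨rfl, rfl⟩
    funext i; cases i <;> rfl

end H2Aux

lemma small_symm (A X : Matrix (Fin m) (Fin m) ℝ) (B : Matrix (Fin m) (Fin p) ℝ) (t : ℝ)
    (hX : Xᵀ = X) :
    (-(fromBlocks (Aᵀ * X + X * A) (X * B) (Bᵀ * X) ((-t) • 1)))ᵀ
      = -(fromBlocks (Aᵀ * X + X * A) (X * B) (Bᵀ * X) ((-t) • 1)) := by
  rw [transpose_neg, fromBlocks_transpose]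
  simp [transpose_add, transpose_mul, hX, transpose_smul]
  rw [add_comm]

lemma small_scale (A X : Matrix (Fin m) (Fin m) ℝ) (B : Matrix (Fin m) (Fin p) ℝ)
    {t : ℝ} (ht : t ≠ 0) :
    -(fromBlocks (Aᵀ * (t⁻¹ • X) + (t⁻¹ • X) * A) ((t⁻¹ • X) * B) (Bᵀ * (t⁻¹ • X)) (-1))
      = t⁻¹ • (-(fromBlocks (Aᵀ * X + X * A) (X * B) (Bᵀ * X) ((-t) • 1))) := by
  simp only [smul_neg, fromBlocks_smul, smul_add, Matrix.mul_smul, Matrix.smul_mul, smul_smul]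
  rw [show t⁻¹ * -t = -1 by field_simp, neg_one_smul]

lemma big_scale (A X : Matrix (Fin m) (Fin m) ℝ) (B : Matrix (Fin m) (Fin p) ℝ) (e : ℝ) :
    -(fromBlocks (Aᵀ * (e • X) + (e • X) * A) ((e • X) * B) (Bᵀ * (e • X)) ((-e) • 1))
      = e • (-(fromBlocks (Aᵀ * X + X * A) (X * B) (Bᵀ * X) (-1))) := by
  simp only [smul_neg, fromBlocks_smul, smul_add, Matrix.mul_smul, Matrix.smul_mul,
    neg_smul, smul_smul]

lemma big_symm (An Ar J X : Matrix (Fin m) (Fin m) ℝ) (Bn Br : Matrix (Fin m) (Fin p) ℝ)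
    (th : ℝ) (hX : Xᵀ = X) :
    (-(psiTwo An Bn J X th + phiTwo Ar Br))ᵀ = -(psiTwo An Bn J X th + phiTwo Ar Br) := by
  simp only [psiTwo, phiTwo, transpose_neg, transpose_add, fromBlocks_transpose,
    transpose_fromCols, transpose_fromRows, transpose_mul, transpose_smul,
    transpose_one, transpose_zero, transpose_neg, transpose_transpose, hX]
  rw [add_comm (Anᵀ * X) (X * An)]

lemma key_identity (An Ar J X : Matrix (Fin m) (Fin m) ℝ) (Bn Br : Matrix (Fin m) (Fin p) ℝ)
    (th : ℝ) (hX : Xᵀ = X) (u : Fin m → ℝ) (v : Fin p → ℝ) (w : Fin m → ℝ) :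
    Sum.elim u (Sum.elim v w) ⬝ᵥ
      ((-(psiTwo An Bn J X th + phiTwo Ar Br)) *ᵥ Sum.elim u (Sum.elim v w))
    = Sum.elim u v ⬝ᵥ
        ((-(fromBlocks ((An + J * Ar)ᵀ * X + X * (An + J * Ar)) (X * (Bn + J * Br))
            ((Bn + J * Br)ᵀ * X) ((-th) • 1))) *ᵥ Sum.elim u v)
      + (Ar *ᵥ u + Br *ᵥ v - w + Jᵀ *ᵥ (X *ᵥ u)) ⬝ᵥ (Ar *ᵥ u + Br *ᵥ v - w + Jᵀ *ᵥ (X *ᵥ u))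
      - (Jᵀ *ᵥ (X *ᵥ u)) ⬝ᵥ (Jᵀ *ᵥ (X *ᵥ u)) := by
  have hsym : ∀ (a b : Fin m → ℝ), a ⬝ᵥ (X *ᵥ b) = (X *ᵥ a) ⬝ᵥ b := by
    intro a b; rw [← hX, dtm, hX]
  simp only [psiTwo, phiTwo, neg_add, fromBlocks_neg, add_mulVec, neg_mulVec,
    fromBlocks_mulVec, fromRows_mulVec, fromCols_mulVec_sumElim,
    sumElim_dotProduct_sumElim, transpose_add, transpose_mul,
    ← mulVec_mulVec, add_mulVec, smul_mulVec, one_mulVec, zero_mulVec,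
    mulVec_add, mulVec_sub, mulVec_neg, neg_smul, neg_neg,
    dotProduct_add, add_dotProduct, dotProduct_sub, sub_dotProduct,
    dotProduct_neg, neg_dotProduct, dotProduct_smul, smul_eq_mul,
    Pi.add_apply, Pi.neg_apply, Sum.elim_comp_inl, Sum.elim_comp_inr,
    dotProduct_zero, zero_dotProduct, dtm, dtm', hsym]
  ring

/-- Theorem 3, LMI form: with `Ā = Ān + JĀr` and `B̄ = B̄n + JB̄r`, the standard `H₂`-norm
LMI system `‖C̄(sI − Ā)⁻¹B̄‖²_{H₂} < γ` with positive definite `X` is feasible iff there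
exist `θ̂ > 0`, positive definite `X̂`, and symmetric `R̂` with `ψ₂(X̂, θ̂) + φ₂ ≺ 0`,
`[[X̂, θ̂C̄ᵀ], [θ̂C̄, R̂]] ≻ 0`, and `trace(R̂) < θ̂γ`. -/
theorem h2_lmi_decoupling (m p q : ℕ) (hm : 1 ≤ m) (hp : 1 ≤ p) (hq : 1 ≤ q)
    (An Ar J : Matrix (Fin m) (Fin m) ℝ) (Bn Br : Matrix (Fin m) (Fin p) ℝ)
    (C : Matrix (Fin q) (Fin m) ℝ) (ga : ℝ) (hga : 0 < ga) :
    (∃ X : Matrix (Fin m) (Fin m) ℝ, ∃ R : Matrix (Fin q) (Fin q) ℝ,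
        X.PosDef ∧ R.IsSymm ∧
        (-(fromBlocks ((An + J * Ar)ᵀ * X + X * (An + J * Ar)) (X * (Bn + J * Br))
            ((Bn + J * Br)ᵀ * X) (-1))).PosDef ∧
        (fromBlocks X Cᵀ C R).PosDef ∧ R.trace < ga) ↔
    (∃ th : ℝ, 0 < th ∧ ∃ X : Matrix (Fin m) (Fin m) ℝ, ∃ R : Matrix (Fin q) (Fin q) ℝ,
        X.PosDef ∧ R.IsSymm ∧
        (-(psiTwo An Bn J X th + phiTwo Ar Br)).PosDef ∧
        (fromBlocks X (th • Cᵀ) (th • C) R).PosDef ∧ R.trace < th * ga) := by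
  constructor
  · rintro ⟨X, R, hX, hR, hN, hCR, htr⟩
    have hXs : Xᵀ = X := posdef_transpose_eq hX
    have : Nonempty (Fin m ⊕ Fin p) := ⟨Sum.inl ⟨0, hm⟩⟩
    obtain ⟨c, hc, hlow⟩ := lower_bound hN
    obtain ⟨K, hK, hup⟩ := upper_bound (Jᵀ * X)
    set e : ℝ := c / (2 * K) with he
    have hepos : 0 < e := by positivity
    have heXs : (e • X)ᵀ = e • X := by rw [transpose_smul, hXs]
    refine ⟨e, hepos, e • X, e • R, posdef_smul hX hepos, hR.smul e, ?_, ?_, ?_⟩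
    · apply posdef_of_qf (big_symm An Ar J (e • X) Bn Br e heXs)
      intro x hx
      set u : Fin m → ℝ := x ∘ Sum.inl with hu
      set v : Fin p → ℝ := x ∘ Sum.inr ∘ Sum.inl with hv
      set w : Fin m → ℝ := x ∘ Sum.inr ∘ Sum.inr with hw
      have hxe : x = Sum.elim u (Sum.elim v w) := by
        funext i; rcases i with i | (i | i) <;> rfl
      rw [hxe, key_identity An Ar J (e • X) Bn Br e heXs u v w,
        big_scale (An + J * Ar) X (Bn + J * Br) e, smul_mulVec, dotProduct_smul,
        smul_eq_mul]
      have hsu : Jᵀ *ᵥ ((e • X) *ᵥ u) = e • (Jᵀ *ᵥ (X *ᵥ u)) := by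
        rw [smul_mulVec, mulVec_smul]
      rw [hsu]
      set s : Fin m → ℝ := Jᵀ *ᵥ (X *ᵥ u) with hs
      set zv : Fin m → ℝ := Ar *ᵥ u + Br *ᵥ v - w + e • s with hzv
      have hsd : (e • s) ⬝ᵥ (e • s) = e * (e * (s ⬝ᵥ s)) := by
        rw [smul_dotProduct, dotProduct_smul, smul_eq_mul, smul_eq_mul]
      rw [hsd]
      have hss : s ⬝ᵥ s ≤ K * (u ⬝ᵥ u) := by
        have := hup u
        rwa [← mulVec_mulVec] at this
      have hzv0 : 0 ≤ zv ⬝ᵥ zv := dot_self_nonneg zv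
      have hQ1 := hlow (Sum.elim u v)
      have hd : Sum.elim u v ⬝ᵥ Sum.elim u v = u ⬝ᵥ u + v ⬝ᵥ v :=
        sumElim_dotProduct_sumElim u u v v
      have huu : 0 ≤ u ⬝ᵥ u := dot_self_nonneg u
      have hvv : 0 ≤ v ⬝ᵥ v := dot_self_nonneg v
      have hss0 : 0 ≤ s ⬝ᵥ s := dot_self_nonneg s
      rcases eq_or_ne (Sum.elim u v) 0 with huv | huv
      · -- u = 0 and v = 0, so w ≠ 0
        obtain ⟨hu0, hv0⟩ := elim_eq_zero_iff.mp huv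
        have hw0 : w ≠ 0 := by
          intro h
          apply hx
          rw [hxe, hu0, hv0, h]
          exact elim_eq_zero_iff.mpr ⟨rfl, elim_eq_zero_iff.mpr ⟨rfl, rfl⟩⟩
        have hs0 : s = 0 := by rw [hs, hu0, mulVec_zero, mulVec_zero]
        have hzw : zv = -w := by rw [hzv, hs0, hu0, hv0, mulVec_zero, mulVec_zero]; simp
        have : zv ⬝ᵥ zv = w ⬝ᵥ w := by rw [hzw]; simp [neg_dotProduct, dotProduct_neg]
        rw [huv, this, hs0]
        simp only [zero_dotProduct, dotProduct_zero, mulVec_zero, mul_zero]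
        have := dot_self_pos hw0
        linarith
      · have hdpos : 0 < Sum.elim u v ⬝ᵥ Sum.elim u v := dot_self_pos huv
        have hKne : K ≠ 0 := ne_of_gt hK
        have hKe : e * K = c / 2 := by
          rw [he]; field_simp
        have hcd : c * (u ⬝ᵥ u + v ⬝ᵥ v) ≤ Sum.elim u v ⬝ᵥ
            ((-(fromBlocks ((An + J * Ar)ᵀ * X + X * (An + J * Ar)) (X * (Bn + J * Br))
              ((Bn + J * Br)ᵀ * X) (-1))) *ᵥ Sum.elim u v) := by
          rw [← hd]; exact hQ1
        rw [hd] at hdpos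
        have f1 : e * (c * (u ⬝ᵥ u + v ⬝ᵥ v)) ≤ e * (Sum.elim u v ⬝ᵥ
            ((-(fromBlocks ((An + J * Ar)ᵀ * X + X * (An + J * Ar)) (X * (Bn + J * Br))
              ((Bn + J * Br)ᵀ * X) (-1))) *ᵥ Sum.elim u v)) :=
          mul_le_mul_of_nonneg_left hcd hepos.le
        have f2 : e * (s ⬝ᵥ s) ≤ e * (K * (u ⬝ᵥ u)) :=
          mul_le_mul_of_nonneg_left hss hepos.le
        have f3 : e * (K * (u ⬝ᵥ u)) = (e * K) * (u ⬝ᵥ u) := by ring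
        have f4 : (e * K) * (u ⬝ᵥ u) = (c / 2) * (u ⬝ᵥ u) := by rw [hKe]
        have f5 : e * (e * (s ⬝ᵥ s)) ≤ e * ((c / 2) * (u ⬝ᵥ u)) :=
          mul_le_mul_of_nonneg_left (by linarith) hepos.le
        have f7 : 0 < e * ((c / 2) * (u ⬝ᵥ u + v ⬝ᵥ v)) :=
          mul_pos hepos (mul_pos (by linarith) hdpos)
        have f8 : 0 ≤ e * (c * (v ⬝ᵥ v)) :=
          mul_nonneg hepos.le (mul_nonneg hc.le hvv)
        nlinarith [f1, f5, f7, f8, hzv0]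
    · rw [show fromBlocks (e • X) (e • Cᵀ) (e • C) (e • R)
          = e • fromBlocks X Cᵀ C R from (fromBlocks_smul e X Cᵀ C R).symm]
      exact posdef_smul hCR hepos
    · rw [trace_smul, smul_eq_mul]
      exact (mul_lt_mul_iff_right₀ hepos).mpr htr
  · rintro ⟨th, hth, X, R, hX, hR, hB, hCR, htr⟩
    have hXs : Xᵀ = X := posdef_transpose_eq hX
    have hc : (0 : ℝ) < th⁻¹ := inv_pos.mpr hth
    have hMth : (-(fromBlocks ((An + J * Ar)ᵀ * X + X * (An + J * Ar)) (X * (Bn + J * Br))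
        ((Bn + J * Br)ᵀ * X) ((-th) • 1))).PosDef := by
      apply posdef_of_qf (small_symm (An + J * Ar) X (Bn + J * Br) th hXs)
      intro y hy
      set u : Fin m → ℝ := y ∘ Sum.inl with hu
      set v : Fin p → ℝ := y ∘ Sum.inr with hv
      have hye : y = Sum.elim u v := by funext i; rcases i with i | i <;> rfl
      set w : Fin m → ℝ := Ar *ᵥ u + Br *ᵥ v + Jᵀ *ᵥ (X *ᵥ u) with hw
      have hbigvec : Sum.elim u (Sum.elim v w) ≠ 0 := by
        intro h
        obtain ⟨h1, h2⟩ := elim_eq_zero_iff.mp h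
        obtain ⟨h3, _⟩ := elim_eq_zero_iff.mp h2
        exact hy (by rw [hye, h1, h3]; exact elim_eq_zero_iff.mpr ⟨rfl, rfl⟩)
      have hbig := qf_pos_of_posdef hB hbigvec
      have hid := key_identity An Ar J X Bn Br th hXs u v w
      have hz : Ar *ᵥ u + Br *ᵥ v - w + Jᵀ *ᵥ (X *ᵥ u) = 0 := by
        rw [hw]; abel
      rw [hz] at hid
      simp only [zero_dotProduct] at hid
      have hss : 0 ≤ (Jᵀ *ᵥ (X *ᵥ u)) ⬝ᵥ (Jᵀ *ᵥ (X *ᵥ u)) := dot_self_nonneg _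
      rw [hye]
      linarith
    refine ⟨th⁻¹ • X, th⁻¹ • R, posdef_smul hX hc, hR.smul th⁻¹, ?_, ?_, ?_⟩
    · rw [small_scale (An + J * Ar) X (Bn + J * Br) hth.ne']
      exact posdef_smul hMth hc
    · have h2 : fromBlocks (th⁻¹ • X) Cᵀ C (th⁻¹ • R)
          = th⁻¹ • fromBlocks X (th • Cᵀ) (th • C) R := by
        rw [fromBlocks_smul, smul_smul, inv_mul_cancel₀ hth.ne', one_smul,
          smul_smul, inv_mul_cancel₀ hth.ne', one_smul]
      rw [h2]
      exact posdef_smul hCR hc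
    · rw [trace_smul, smul_eq_mul]
      have := (mul_lt_mul_iff_right₀ hc).mpr htr
      rwa [← mul_assoc, inv_mul_cancel₀ hth.ne', one_mul] at this
end
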